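/- arXiv:1401.7969 — 6 statements merged into one kernel-verified Lean document; each statement's English description precedes it below -/
import Mathlib

section
/- Let (X,μ) be a finite measure space, S : X → ℝ measurable, and suppose there are constants C₀ > 0, δ > 0 and d ∈ {0,1} such that μ({x : |S(x)| < ε}) ≤ C₀ ε^δ (ln(1/ε))^d for all 0 < ε < 1/2. Let p ∈ (0,1] and suppose δ < p. Then there is a constant C > 0, depending only on C₀, δ, d, p and μ(X), such that for all λ ≥ 2, ∫_X min(1, (λ|S(x)|)^{-p}) dμ(x) ≤ C λ^{-δ} (ln λ)^d. -/
open MeasureTheory Topology Filter Set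

/-- The measure-theoretic estimate of equations (3.24)–(3.31):
from the sublevel bound `μ{|S|<ε} ≤ C₀ ε^δ (ln(1/ε))^d` one gets a bound on
`∫ min(1, (λ|S|)^{-p}) dμ` (the minimum interpreted as 1 where `S = 0`). -/
theorem stmt_6 {X : Type*} [MeasurableSpace X] (μ : Measure X) [IsFiniteMeasure μ]
    (S : X → ℝ) (hS : Measurable S)
    (C₀ δ : ℝ) (d : ℕ) (hC₀ : 0 < C₀) (hδ : 0 < δ) (hd : d ≤ 1)
    (hsub : ∀ ε : ℝ, 0 < ε → ε < 1 / 2 →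
      (μ {x | |S x| < ε}).toReal ≤ C₀ * ε ^ δ * Real.log (1 / ε) ^ d)
    (p : ℝ) (hp0 : 0 < p) (hp1 : p ≤ 1) (hδp : δ < p) :
    ∃ C > (0 : ℝ), ∀ lam : ℝ, 2 ≤ lam →
      (∫ x, (if S x = 0 then (1 : ℝ) else min 1 ((lam * |S x|) ^ (-p))) ∂μ) ≤
        C * lam ^ (-δ) * Real.log lam ^ d := by
  classical
  have hp0' : 0 ≤ p := hp0.le
  set θ : ℝ := (2:ℝ) ^ (δ - p) with hθdef
  have hθ0 : (0:ℝ) < θ := Real.rpow_pos_of_pos two_pos _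
  have hθ1 : θ < 1 := Real.rpow_lt_one_of_one_lt_of_neg one_lt_two (by linarith)
  have h1θ : 0 < 1 - θ := by linarith
  have h2p : (0:ℝ) < (2:ℝ) ^ p := Real.rpow_pos_of_pos two_pos _
  have h22p : (0:ℝ) < (2:ℝ) ^ (2*p) := Real.rpow_pos_of_pos two_pos _
  have hβ0 : (0:ℝ) < (2:ℝ) ^ (-p) := Real.rpow_pos_of_pos two_pos _
  set M : ℝ := (μ Set.univ).toReal with hMdef
  have hM0 : 0 ≤ M := ENNReal.toReal_nonneg
  have hlog2 : 0 < Real.log 2 := Real.log_pos one_lt_two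
  have rpow_pow : ∀ (q : ℝ) (k : ℕ), ((2:ℝ)^k) ^ q = ((2:ℝ)^q) ^ k := by
    intro q k
    rw [← Real.rpow_natCast (2:ℝ) k, ← Real.rpow_natCast ((2:ℝ)^q) k,
      ← Real.rpow_mul (by norm_num), ← Real.rpow_mul (by norm_num), mul_comm]
  refine ⟨2*C₀ + 2*C₀*(2:ℝ)^p/(1-θ) + (2:ℝ)^(2*p)*M/Real.log 2, ?_, ?_⟩
  · have h1 : (0:ℝ) < 2*C₀ := by linarith
    have h2 : (0:ℝ) ≤ 2*C₀*(2:ℝ)^p/(1-θ) := by positivity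
    have h3 : (0:ℝ) ≤ (2:ℝ)^(2*p)*M/Real.log 2 := by positivity
    linarith
  intro lam hlam
  have hlam1 : (1:ℝ) < lam := by linarith
  have hlam0 : (0:ℝ) < lam := by linarith
  have hloglam : 0 < Real.log lam := Real.log_pos hlam1
  have hlogd : (0:ℝ) < Real.log lam ^ d := pow_pos hloglam d
  have hlamδ : (0:ℝ) < lam ^ (-δ) := Real.rpow_pos_of_pos hlam0 _
  have anti : ∀ a b : ℝ, 0 < a → a ≤ b → b ^ (-p) ≤ a ^ (-p) := by
    intro a b ha hab
    rw [Real.rpow_neg ha.le, Real.rpow_neg (ha.trans_le hab).le]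
    exact inv_anti₀ (Real.rpow_pos_of_pos ha p) (Real.rpow_le_rpow ha.le hab hp0')
  -- choose K with 2^K < lam ≤ 2^(K+1)
  obtain ⟨K, h2K, hK2⟩ : ∃ K : ℕ, (2:ℝ)^K < lam ∧ lam ≤ 2^(K+1) := by
    have hex : ∃ m : ℕ, lam ≤ (2:ℝ) ^ (m+1) := by
      obtain ⟨m, hm⟩ := pow_unbounded_of_one_lt (R := ℝ) lam one_lt_two
      refine ⟨m, hm.le.trans (pow_le_pow_right₀ one_le_two (by omega))⟩
    refine ⟨Nat.find hex, ?_, Nat.find_spec hex⟩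
    rcases Nat.eq_zero_or_pos (Nat.find hex) with h | h
    · rw [h]; simpa using hlam1
    · have h2 : ¬ lam ≤ (2:ℝ)^((Nat.find hex - 1)+1) := Nat.find_min hex (by omega)
      have h3 : Nat.find hex - 1 + 1 = Nat.find hex := by omega
      rw [h3] at h2
      linarith [not_le.mp h2]
  set A : ℕ → Set X := fun k => {x | |S x| < 2^k / (2*lam)} with hAdef
  have hAm : ∀ k, MeasurableSet (A k) := fun k => measurableSet_lt hS.abs measurable_const
  have hmemA : ∀ k x, x ∉ A k → (2:ℝ)^k/(2*lam) ≤ |S x| := by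
    intro k x hx
    by_contra hlt
    exact hx (by rw [hAdef]; exact Set.mem_setOf_eq ▸ not_le.mp hlt)
  set F : X → ℝ := fun x => if S x = 0 then (1:ℝ) else min 1 ((lam * |S x|) ^ (-p)) with hFdef
  have hF0 : ∀ x, 0 ≤ F x := by
    intro x
    rw [hFdef]
    dsimp only
    split
    · norm_num
    · exact le_min zero_le_one (Real.rpow_nonneg (by positivity) _)
  have hF1 : ∀ x, F x ≤ 1 := by
    intro x; rw [hFdef]; dsimp only; split
    · exact le_refl 1
    · exact min_le_left _ _
  have hFkey : ∀ (k:ℕ) (x : X), (2:ℝ)^k/(2*lam) ≤ |S x| →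
      F x ≤ (2:ℝ)^p * ((2:ℝ)^(-p))^k := by
    intro k x hx
    have hpos : (0:ℝ) < 2^k/(2*lam) := by positivity
    have habs : 0 < |S x| := lt_of_lt_of_le hpos hx
    have hS0 : S x ≠ 0 := fun h => by simp [h] at habs
    rw [hFdef]; dsimp only; rw [if_neg hS0]
    have heq : lam * ((2:ℝ)^k/(2*lam)) = 2^k * 2⁻¹ := by field_simp
    have h1 : (2:ℝ)^k * 2⁻¹ ≤ lam * |S x| := by
      rw [← heq]; exact mul_le_mul_of_nonneg_left hx hlam0.le
    refine (min_le_right _ _).trans ((anti _ _ (by positivity) h1).trans_eq ?_)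
    rw [Real.mul_rpow (by positivity) (by norm_num), rpow_pow,
      Real.inv_rpow (by norm_num), Real.rpow_neg (by norm_num : (0:ℝ) ≤ 2), inv_inv]
    ring
  set c : ℕ → ℝ := fun k => (2:ℝ)^p * ((2:ℝ)^(-p))^k with hcdef
  have hc0 : ∀ k, 0 ≤ c k := fun k => mul_nonneg h2p.le (pow_nonneg hβ0.le k)
  set g : X → ℝ := fun x => (A 0).indicator (fun _ => (1:ℝ)) x
      + (∑ k ∈ Finset.range K, c k * (A (k+1) \ A k).indicator (fun _ => (1:ℝ)) x)
      + c K with hgdef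
  have hind : ∀ s : Set X, MeasurableSet s → Integrable (s.indicator fun _ => (1:ℝ)) μ :=
    fun s hs => (integrable_indicator_iff hs).2 (integrableOn_const (measure_ne_top μ s))
  have hsumInt : Integrable (fun x => ∑ k ∈ Finset.range K,
      c k * (A (k+1) \ A k).indicator (fun _ => (1:ℝ)) x) μ :=
    integrable_finset_sum _ fun k _ => ((hind _ ((hAm (k+1)).diff (hAm k))).const_mul _)
  have hgi : Integrable g μ := by
    rw [hgdef]
    exact ((hind _ (hAm 0)).add hsumInt).add (integrable_const _)
  have hFg : ∀ x, F x ≤ g x := by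
    intro x
    have hsum0 : 0 ≤ ∑ k ∈ Finset.range K,
        c k * (A (k+1) \ A k).indicator (fun _ => (1:ℝ)) x :=
      Finset.sum_nonneg fun k _ => mul_nonneg (hc0 k)
        (Set.indicator_apply_nonneg fun _ => zero_le_one)
    have hind0 : 0 ≤ (A 0).indicator (fun _ => (1:ℝ)) x :=
      Set.indicator_apply_nonneg fun _ => zero_le_one
    by_cases h0 : x ∈ A 0
    · have he : (A 0).indicator (fun _ => (1:ℝ)) x = 1 := Set.indicator_of_mem h0 _
      rw [hgdef]; dsimp only; rw [he]
      have := hF1 x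
      have := hc0 K
      linarith
    · by_cases hK : x ∈ A K
      · have hK1 : 0 < K := by
          rcases Nat.eq_zero_or_pos K with h | h
          · exact absurd (h ▸ hK) h0
          · exact h
        have hex2 : ∃ j, x ∈ A (j+1) := ⟨K-1, by rwa [Nat.sub_add_cancel hK1]⟩
        have hj1 : x ∈ A (Nat.find hex2 + 1) := Nat.find_spec hex2
        have hj2 : x ∉ A (Nat.find hex2) := by
          rcases Nat.eq_zero_or_pos (Nat.find hex2) with h | h
          · rw [h]; exact h0
          · have h4 := Nat.find_min hex2 (m := Nat.find hex2 - 1) (by omega)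
            rwa [Nat.sub_add_cancel h] at h4
        have hjK : Nat.find hex2 < K := by
          have hle : Nat.find hex2 ≤ K - 1 :=
            Nat.find_le (by rwa [Nat.sub_add_cancel hK1])
          omega
        have hb : F x ≤ c (Nat.find hex2) := hFkey _ x (hmemA _ x hj2)
        have hmemd : x ∈ A (Nat.find hex2+1) \ A (Nat.find hex2) := ⟨hj1, hj2⟩
        have hterm : c (Nat.find hex2)
            = c (Nat.find hex2) * (A (Nat.find hex2+1) \ A (Nat.find hex2)).indicator (fun _ => (1:ℝ)) x := by
          rw [Set.indicator_of_mem hmemd, mul_one]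
        have hsum_ge : c (Nat.find hex2) * (A (Nat.find hex2+1) \ A (Nat.find hex2)).indicator (fun _ => (1:ℝ)) x
            ≤ ∑ k ∈ Finset.range K, c k * (A (k+1) \ A k).indicator (fun _ => (1:ℝ)) x :=
          Finset.single_le_sum
            (f := fun k => c k * (A (k+1) \ A k).indicator (fun _ => (1:ℝ)) x)
            (fun i _ => mul_nonneg (hc0 i)
            (Set.indicator_apply_nonneg fun _ => zero_le_one)) (Finset.mem_range.mpr hjK)
        rw [hgdef]; dsimp only
        have := hc0 K
        rw [hterm] at hb
        linarith
      · have hb : F x ≤ c K := hFkey K x (hmemA K x hK)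
        rw [hgdef]; dsimp only
        linarith
  have hInt : ∫ x, g x ∂μ = (μ (A 0)).toReal
      + (∑ k ∈ Finset.range K, c k * (μ (A (k+1) \ A k)).toReal)
      + c K * M := by
    have h12 : Integrable (fun x => (A 0).indicator (fun _ => (1:ℝ)) x
        + ∑ k ∈ Finset.range K, c k * (A (k+1) \ A k).indicator (fun _ => (1:ℝ)) x) μ :=
      (hind _ (hAm 0)).add hsumInt
    have h1' : Integrable (fun x => (A 0).indicator (fun _ => (1:ℝ)) x) μ := hind _ (hAm 0)
    simp only [hgdef]
    rw [integral_add h12 (integrable_const _),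
        integral_add h1' hsumInt,
        integral_finset_sum _ (fun k _ => (hind _ ((hAm (k+1)).diff (hAm k))).const_mul _),
        integral_const]
    congr 1
    · congr 1
      · simpa [measureReal_def] using integral_indicator_const (1:ℝ) (hAm 0)
      · refine Finset.sum_congr rfl fun k _ => ?_
        rw [integral_const_mul]
        simp [measureReal_def, integral_indicator_const (1:ℝ) ((hAm (k+1)).diff (hAm k))]
    · rw [hMdef, smul_eq_mul, measureReal_def]; ring
  -- measure bounds
  have hA_bound : ∀ k : ℕ, (2:ℝ)^k < lam →
      (μ (A k)).toReal ≤ C₀ * ((2:ℝ)^k/(2*lam))^δ * (2 * Real.log lam ^ d) := by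
    intro k hk
    have hε0 : (0:ℝ) < 2^k/(2*lam) := by positivity
    have hε2 : (2:ℝ)^k/(2*lam) < 1/2 := by
      rw [div_lt_div_iff₀ (by positivity) (by norm_num)]
      linarith
    have h1 := hsub _ hε0 hε2
    have hAe : A k = {x | |S x| < 2^k/(2*lam)} := by rw [hAdef]
    rw [hAe]
    refine h1.trans ?_
    have hεδ : (0:ℝ) ≤ C₀ * ((2:ℝ)^k/(2*lam))^δ :=
      mul_nonneg hC₀.le (Real.rpow_nonneg hε0.le _)
    have hlog : Real.log (1/((2:ℝ)^k/(2*lam))) ^ d ≤ 2 * Real.log lam ^ d := by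
      have hlogε : Real.log (1/((2:ℝ)^k/(2*lam))) ≤ 2 * Real.log lam := by
        rw [one_div, Real.log_inv, Real.log_div (by positivity) (by positivity),
            Real.log_mul (by norm_num) (ne_of_gt hlam0), Real.log_pow]
        have h2l : Real.log 2 ≤ Real.log lam := Real.log_le_log two_pos hlam
        have hk2 : (0:ℝ) ≤ (k:ℝ) * Real.log 2 := by positivity
        linarith
      interval_cases d
      · norm_num
      · simpa using hlogε
    calc C₀ * ((2:ℝ)^k/(2*lam))^δ * Real.log (1/((2:ℝ)^k/(2*lam))) ^ d
        ≤ C₀ * ((2:ℝ)^k/(2*lam))^δ * (2 * Real.log lam ^ d) :=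
          mul_le_mul_of_nonneg_left hlog hεδ
      _ = _ := rfl
  -- T1 bound
  have hT1 : (μ (A 0)).toReal ≤ 2*C₀ * lam^(-δ) * Real.log lam ^ d := by
    have h := hA_bound 0 (by simpa using hlam1)
    have hε : ((2:ℝ)^0/(2*lam))^δ ≤ lam^(-δ) := by
      rw [Real.rpow_neg hlam0.le, ← Real.inv_rpow hlam0.le]
      refine Real.rpow_le_rpow (by positivity) ?_ hδ.le
      rw [pow_zero, one_div]
      exact inv_anti₀ hlam0 (by linarith)
    refine h.trans ?_
    have h2L : (0:ℝ) ≤ 2 * Real.log lam ^ d := by positivity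
    calc C₀ * ((2:ℝ)^0/(2*lam))^δ * (2 * Real.log lam ^ d)
        ≤ C₀ * lam^(-δ) * (2 * Real.log lam ^ d) := by
          apply mul_le_mul_of_nonneg_right (mul_le_mul_of_nonneg_left hε hC₀.le) h2L
      _ = 2*C₀ * lam^(-δ) * Real.log lam ^ d := by ring
  -- T2 bound
  have hT2 : (∑ k ∈ Finset.range K, c k * (μ (A (k+1) \ A k)).toReal)
      ≤ (2*C₀*(2:ℝ)^p/(1-θ)) * lam^(-δ) * Real.log lam ^ d := by
    have hconst : (0:ℝ) ≤ 2*C₀*(2:ℝ)^p*lam^(-δ)*Real.log lam ^ d :=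
      mul_nonneg (mul_nonneg (mul_nonneg (by linarith) h2p.le) hlamδ.le) hlogd.le
    have hstep : ∀ k ∈ Finset.range K, c k * (μ (A (k+1) \ A k)).toReal
        ≤ (2*C₀*(2:ℝ)^p*lam^(-δ)*Real.log lam ^ d) * θ^k := by
      intro k hk
      have hkK : k + 1 ≤ K := Finset.mem_range.mp hk
      have hm : (μ (A (k+1) \ A k)).toReal ≤ (μ (A (k+1))).toReal :=
        ENNReal.toReal_mono (measure_ne_top μ _) (measure_mono Set.diff_subset)
      have hb := hA_bound (k+1) (lt_of_le_of_lt (pow_le_pow_right₀ one_le_two hkK) h2K)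
      have hε : ((2:ℝ)^(k+1)/(2*lam))^δ = ((2:ℝ)^δ)^k * lam^(-δ) := by
        have h1 : (2:ℝ)^(k+1)/(2*lam) = 2^k/lam := by
          rw [pow_succ]; field_simp
        rw [h1, Real.div_rpow (by positivity) hlam0.le, Real.rpow_neg hlam0.le,
          div_eq_mul_inv, rpow_pow]
      have hθk : ((2:ℝ)^(-p))^k * ((2:ℝ)^δ)^k = θ^k := by
        rw [← mul_pow, hθdef, ← Real.rpow_add two_pos]
        ring_nf
      calc c k * (μ (A (k+1) \ A k)).toReal
          ≤ c k * (C₀ * ((2:ℝ)^(k+1)/(2*lam))^δ * (2 * Real.log lam ^ d)) :=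
            mul_le_mul_of_nonneg_left (hm.trans hb) (hc0 k)
        _ = (2*C₀*(2:ℝ)^p*lam^(-δ)*Real.log lam ^ d) * (((2:ℝ)^(-p))^k * ((2:ℝ)^δ)^k) := by
            rw [hcdef, hε]; ring
        _ = (2*C₀*(2:ℝ)^p*lam^(-δ)*Real.log lam ^ d) * θ^k := by rw [hθk]
    calc (∑ k ∈ Finset.range K, c k * (μ (A (k+1) \ A k)).toReal)
        ≤ ∑ k ∈ Finset.range K, (2*C₀*(2:ℝ)^p*lam^(-δ)*Real.log lam ^ d) * θ^k :=
          Finset.sum_le_sum hstep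
      _ = (2*C₀*(2:ℝ)^p*lam^(-δ)*Real.log lam ^ d) * ∑ k ∈ Finset.range K, θ^k := by
          rw [Finset.mul_sum]
      _ ≤ (2*C₀*(2:ℝ)^p*lam^(-δ)*Real.log lam ^ d) * (1-θ)⁻¹ := by
          refine mul_le_mul_of_nonneg_left ?_ hconst
          calc ∑ k ∈ Finset.range K, θ^k ≤ ∑' k : ℕ, θ^k :=
                Summable.sum_le_tsum _ (fun i _ => pow_nonneg hθ0.le i)
                  (summable_geometric_of_lt_one hθ0.le hθ1)
            _ = (1-θ)⁻¹ := tsum_geometric_of_lt_one hθ0.le hθ1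
      _ = (2*C₀*(2:ℝ)^p/(1-θ)) * lam^(-δ) * Real.log lam ^ d := by
          rw [div_eq_mul_inv]; ring
  -- T3 bound
  have hT3 : c K * M ≤ ((2:ℝ)^(2*p)*M/Real.log 2) * lam^(-δ) * Real.log lam ^ d := by
    have h1 : ((2:ℝ)^(-p))^K = ((2:ℝ)^(K:ℕ) : ℝ)^(-p) := (rpow_pow (-p) K).symm
    have hl2 : lam/2 ≤ (2:ℝ)^K := by
      rw [div_le_iff₀ two_pos]
      calc lam ≤ 2^(K+1) := hK2
        _ = 2^K * 2 := by rw [pow_succ]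
    have h2 : ((2:ℝ)^K : ℝ)^(-p) ≤ (lam/2)^(-p) := anti _ _ (by positivity) hl2
    have h3 : (lam/2)^(-p) = (2:ℝ)^p * lam^(-p) := by
      rw [Real.div_rpow hlam0.le (by norm_num),
        Real.rpow_neg (by norm_num : (0:ℝ) ≤ 2), div_eq_mul_inv, inv_inv]
      ring
    have h4 : lam^(-p) ≤ lam^(-δ) :=
      Real.rpow_le_rpow_of_exponent_le hlam1.le (by linarith)
    have h5 : Real.log 2 ≤ Real.log lam ^ d := by
      interval_cases d
      · simpa using Real.log_two_lt_d9.le.trans (by norm_num)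
      · simpa using Real.log_le_log two_pos hlam
    have h6 : (2:ℝ)^p*(2:ℝ)^p = (2:ℝ)^(2*p) := by
      rw [← Real.rpow_add two_pos]; ring_nf
    have hX : (0:ℝ) ≤ (2:ℝ)^(2*p)*lam^(-δ)*M :=
      mul_nonneg (mul_nonneg h22p.le hlamδ.le) hM0
    calc c K * M ≤ ((2:ℝ)^p * ((2:ℝ)^p * lam^(-p))) * M := by
          refine mul_le_mul_of_nonneg_right ?_ hM0
          rw [hcdef]
          dsimp only
          rw [h1, ← h3]
          exact mul_le_mul_of_nonneg_left h2 h2p.le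
      _ = (2:ℝ)^(2*p) * lam^(-p) * M := by rw [← h6]; ring
      _ ≤ (2:ℝ)^(2*p) * lam^(-δ) * M := by
          refine mul_le_mul_of_nonneg_right (mul_le_mul_of_nonneg_left h4 h22p.le) hM0
      _ ≤ ((2:ℝ)^(2*p)*M/Real.log 2) * lam^(-δ) * Real.log lam ^ d := by
          rw [div_mul_eq_mul_div, div_mul_eq_mul_div, le_div_iff₀ hlog2]
          nlinarith [mul_le_mul_of_nonneg_left h5 hX]
  calc ∫ x, F x ∂μ ≤ ∫ x, g x ∂μ :=
        integral_mono_of_nonneg (Filter.Eventually.of_forall hF0) hgi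
          (Filter.Eventually.of_forall hFg)
    _ = (μ (A 0)).toReal
        + (∑ k ∈ Finset.range K, c k * (μ (A (k+1) \ A k)).toReal)
        + c K * M := hInt
    _ ≤ 2*C₀ * lam^(-δ) * Real.log lam ^ d
        + (2*C₀*(2:ℝ)^p/(1-θ)) * lam^(-δ) * Real.log lam ^ d
        + ((2:ℝ)^(2*p)*M/Real.log 2) * lam^(-δ) * Real.log lam ^ d :=
          add_le_add (add_le_add hT1 hT2) hT3
    _ = (2*C₀ + 2*C₀*(2:ℝ)^p/(1-θ) + (2:ℝ)^(2*p)*M/Real.log 2) * lam^(-δ)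
        * Real.log lam ^ d := by ring
end

section
/- Let (X,μ) be a finite measure space, S : X → ℝ measurable, and suppose there are constants C₀ > 0, δ > 0 and d ∈ {0,1} such that μ({x : |S(x)| < ε}) ≤ C₀ ε^δ (ln(1/ε))^d for all 0 < ε < 1/2. Let p ∈ (0,1] and suppose δ > p. Then there is a constant C > 0, depending only on C₀, δ, d, p and μ(X), such that for all λ ≥ 2, ∫_X min(1, (λ|S(x)|)^{-p}) dμ(x) ≤ C λ^{-p}. -/
open MeasureTheory Topology Filter Set

private lemma aux_logd {d : ℕ} (hd : d ≤ 1) {r y : ℝ} (hr : 0 < r) (hy : 1 ≤ y) :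
    Real.log y ^ d ≤ (1 + 1/r) * y ^ r := by
  have hyr : (1:ℝ) ≤ y ^ r := Real.one_le_rpow hy hr.le
  have hrinv : 0 < 1/r := by positivity
  interval_cases d
  · simp only [pow_zero]
    nlinarith
  · simp only [pow_one]
    have h1 : Real.log y ≤ y ^ r / r := Real.log_le_rpow_div (zero_le_one.trans hy) hr
    have : y ^ r / r = (1/r) * y ^ r := by ring
    nlinarith

set_option maxHeartbeats 2000000 in
/-- The measure-theoretic estimate of equations (3.24)–(3.31):
from the sublevel bound `μ{|S|<ε} ≤ C₀ ε^δ (ln(1/ε))^d` one gets a bound on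
`∫ min(1, (λ|S|)^{-p}) dμ` (the minimum interpreted as 1 where `S = 0`). -/
theorem stmt_7 {X : Type*} [MeasurableSpace X] (μ : Measure X) [IsFiniteMeasure μ]
    (S : X → ℝ) (hS : Measurable S)
    (C₀ δ : ℝ) (d : ℕ) (hC₀ : 0 < C₀) (hδ : 0 < δ) (hd : d ≤ 1)
    (hsub : ∀ ε : ℝ, 0 < ε → ε < 1 / 2 →
      (μ {x | |S x| < ε}).toReal ≤ C₀ * ε ^ δ * Real.log (1 / ε) ^ d)
    (p : ℝ) (hp0 : 0 < p) (hp1 : p ≤ 1) (hδp : δ > p) :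
    ∃ C > (0 : ℝ), ∀ lam : ℝ, 2 ≤ lam →
      (∫ x, (if S x = 0 then (1 : ℝ) else min 1 ((lam * |S x|) ^ (-p))) ∂μ) ≤
        C * lam ^ (-p) := by
  set r : ℝ := (δ - p) / 2 with hr_def
  have hr : 0 < r := by simp only [hr_def]; linarith
  set q : ℝ := (2:ℝ) ^ (-r) with hq_def
  have hq0 : 0 < q := Real.rpow_pos_of_pos two_pos _
  have hq1 : q < 1 := by
    rw [hq_def]
    exact Real.rpow_lt_one_of_one_lt_of_neg one_lt_two (by linarith)
  set K₁ : ℝ := C₀ * (1 + 1/r) with hK₁_def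
  have hK₁ : 0 < K₁ := by positivity
  have h1q : 0 < 1 - q := by linarith
  set C : ℝ := K₁ + (4:ℝ) ^ p * (μ univ).toReal + 2 * K₁ * (1/(1-q)) with hC_def
  refine ⟨C, by positivity, ?_⟩
  intro lam hlam
  have hlam0 : (0:ℝ) < lam := by linarith
  -- the integrand
  set g : X → ℝ := fun x => if S x = 0 then (1:ℝ) else min 1 ((lam * |S x|) ^ (-p)) with hg_def
  have hg_meas : Measurable g := by
    apply Measurable.ite (hS (measurableSet_singleton 0)) measurable_const
    have hrp : Measurable fun z : ℝ => z ^ (-p) := by measurability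
    exact measurable_const.min (hrp.comp ((measurable_const_mul lam).comp hS.abs))
  have hrp_meas : Measurable fun z : ℝ => z ^ (-p) := by measurability
  set F : X → ℝ := fun x => min ((2*lam) ^ p) (|S x| ^ (-p)) with hF_def
  have hF_meas : Measurable F := measurable_const.min (hrp_meas.comp hS.abs)
  have hF_nonneg : ∀ x, 0 ≤ F x := fun x =>
    le_min (Real.rpow_nonneg (by linarith) _) (Real.rpow_nonneg (abs_nonneg _) _)
  have hF_le : ∀ x, F x ≤ (2*lam) ^ p := fun x => min_le_left _ _
  set E : Set X := {x | |S x| < 1/(2*lam)} with hE_def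
  have hE_meas : MeasurableSet E := measurableSet_lt hS.abs measurable_const
  have hg01 : ∀ x, 0 ≤ g x ∧ g x ≤ 1 := by
    intro x
    simp only [hg_def]
    split
    · exact ⟨zero_le_one, le_refl 1⟩
    · exact ⟨le_min zero_le_one (Real.rpow_nonneg (by positivity) _), min_le_left _ _⟩
  have hlamp : 0 ≤ lam ^ (-p) := Real.rpow_nonneg hlam0.le _
  have hpt1 : ∀ x, g x ≤ E.indicator (fun _ => (1:ℝ)) x + lam ^ (-p) * F x := by
    intro x
    by_cases hx : x ∈ E
    · rw [indicator_of_mem hx]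
      have := (hg01 x).2
      nlinarith [hF_nonneg x]
    · rw [indicator_of_notMem hx, zero_add]
      have hxge : 1/(2*lam) ≤ |S x| := not_lt.1 hx
      have hSx0 : S x ≠ 0 := by
        intro h
        rw [h, abs_zero] at hxge
        have : (0:ℝ) < 1/(2*lam) := by positivity
        linarith
      have habs : 0 < |S x| := abs_pos.2 hSx0
      simp only [hg_def, hF_def, if_neg hSx0]
      rw [mul_min_of_nonneg _ _ hlamp]
      refine min_le_min ?_ (le_of_eq ?_)
      · have h1 : lam ^ (-p) * (2*lam) ^ p = 2 ^ p := by
          rw [Real.mul_rpow (by norm_num) hlam0.le, ← mul_assoc,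
            mul_comm (lam ^ (-p)) ((2:ℝ) ^ p), mul_assoc, ← Real.rpow_add hlam0]
          simp
        rw [h1]
        exact Real.one_le_rpow one_le_two hp0.le
      · rw [← Real.mul_rpow hlam0.le (abs_nonneg _)]
  -- helper facts about powers of 2
  have h2mono : ∀ a b : ℝ, a ≤ b → (2:ℝ)^a ≤ (2:ℝ)^b :=
    fun a b h => Real.rpow_le_rpow_of_exponent_le one_le_two h
  have h2pow : ∀ a b : ℝ, ((2:ℝ)^a)^b = (2:ℝ)^(a*b) :=
    fun a b => (Real.rpow_mul (by norm_num) a b).symm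
  have h2pos : ∀ a : ℝ, (0:ℝ) < (2:ℝ)^a := fun a => Real.rpow_pos_of_pos two_pos a
  set N : ℕ := ⌈Real.logb 2 (2*lam)⌉₊ with hN_def
  have hNge : 2*lam ≤ (2:ℝ) ^ (N:ℝ) := by
    calc 2*lam = (2:ℝ) ^ Real.logb 2 (2*lam) :=
          (Real.rpow_logb two_pos (by norm_num) (by linarith)).symm
    _ ≤ (2:ℝ) ^ (N:ℝ) := h2mono _ _ (Nat.le_ceil _)
  have hN1 : 1 ≤ N := by
    rcases Nat.eq_zero_or_pos N with h | h
    · exfalso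
      rw [h] at hNge
      simp only [Nat.cast_zero, Real.rpow_zero] at hNge
      linarith
    · exact h
  set A : ℕ → Set X := fun k => {x | |S x| < (2:ℝ) ^ (-((k:ℝ)+2))} with hA_def
  have hA_meas : ∀ k, MeasurableSet (A k) := fun k => measurableSet_lt hS.abs measurable_const
  set c : ℕ → ℝ := fun k => (2:ℝ) ^ (((k:ℝ)+3)*p) with hc_def
  have hc_nonneg : ∀ k, 0 ≤ c k := fun k => (h2pos _).le
  have h4p : (0:ℝ) < (4:ℝ)^p := Real.rpow_pos_of_pos (by norm_num) _
  have h4p2 : (4:ℝ)^p = (2:ℝ)^(2*p) := by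
    rw [show (4:ℝ) = (2:ℝ)^(2:ℝ) by
      rw [show (2:ℝ) = ((2:ℕ):ℝ) by norm_num, Real.rpow_natCast]; norm_num]
    rw [h2pow]
  have hpt2 : ∀ x, F x ≤ (4:ℝ)^p
      + ∑ k ∈ Finset.range N, c k * (A k).indicator (fun _ => (1:ℝ)) x := by
    intro x
    have hind_nonneg : ∀ j, (0:ℝ) ≤ (A j).indicator (fun _ => (1:ℝ)) x :=
      fun j => indicator_nonneg (fun _ _ => zero_le_one) x
    have hsum_nonneg : (0:ℝ) ≤ ∑ k ∈ Finset.range N, c k * (A k).indicator (fun _ => (1:ℝ)) x :=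
      Finset.sum_nonneg fun k _ => mul_nonneg (hc_nonneg k) (hind_nonneg k)
    have key : ∀ k, k ∈ Finset.range N → x ∈ A k → F x ≤ c k →
        F x ≤ (4:ℝ)^p + ∑ j ∈ Finset.range N, c j * (A j).indicator (fun _ => (1:ℝ)) x := by
      intro k hk hxk hFk
      have h1 : c k * (A k).indicator (fun _ => (1:ℝ)) x = c k := by
        rw [indicator_of_mem hxk]; ring
      have h2 : c k * (A k).indicator (fun _ => (1:ℝ)) x
          ≤ ∑ j ∈ Finset.range N, c j * (A j).indicator (fun _ => (1:ℝ)) x :=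
        Finset.single_le_sum (fun j _ => mul_nonneg (hc_nonneg j) (hind_nonneg j)) hk
      rw [h1] at h2
      linarith
    by_cases h0 : (2:ℝ)^(-(2:ℝ)) ≤ |S x|
    · have hle : |S x| ^ (-p) ≤ ((2:ℝ)^(-(2:ℝ)))^(-p) :=
        Real.rpow_le_rpow_of_nonpos (h2pos _) h0 (by linarith)
      have heq : ((2:ℝ)^(-(2:ℝ)))^(-p) = (4:ℝ)^p := by
        rw [h2pow, h4p2]; norm_num
      have : F x ≤ (4:ℝ)^p := (min_le_right _ _).trans (by rw [← heq]; exact hle)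
      linarith
    · push_neg at h0
      by_cases h1 : |S x| < (2:ℝ)^(-((N:ℝ)+1))
      · have hkN : N - 1 ∈ Finset.range N := Finset.mem_range.2 (by omega)
        have hcast : ((N-1 : ℕ):ℝ) = (N:ℝ) - 1 := by
          push_cast [Nat.cast_sub hN1]; ring
        have hxk : x ∈ A (N-1) := by
          simp only [hA_def, mem_setOf_eq, hcast]
          have : -((N:ℝ) - 1 + 2) = -((N:ℝ)+1) := by ring
          rw [this]; exact h1
        have hFk : F x ≤ c (N-1) := by
          refine (min_le_left _ _).trans ?_
          have hstep : (2*lam) ^ p ≤ ((2:ℝ)^((N:ℝ)+2)) ^ p :=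
            Real.rpow_le_rpow (by linarith) (hNge.trans (h2mono _ _ (by linarith))) hp0.le
          refine hstep.trans (le_of_eq ?_)
          rw [h2pow, hc_def]
          simp only [hcast]
          congr 1
          ring
        exact key _ hkN hxk hFk
      · push_neg at h1
        have habs : 0 < |S x| := lt_of_lt_of_le (h2pos _) h1
        set L : ℝ := Real.logb 2 |S x| with hL_def
        have hSL : |S x| = (2:ℝ) ^ L := (Real.rpow_logb two_pos (by norm_num) habs).symm
        have ht2 : 2 < -L := by
          rw [hSL] at h0
          have := (Real.rpow_lt_rpow_left_iff one_lt_two).1 h0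
          linarith
        have htN : -L ≤ (N:ℝ) + 1 := by
          rw [hSL] at h1
          have := (Real.rpow_le_rpow_left_iff one_lt_two).1 h1
          linarith
        set k : ℕ := ⌈-L⌉₊ - 3 with hk_def
        have hceil3 : 3 ≤ ⌈-L⌉₊ := by
          have h2c : (2:ℝ) < (⌈-L⌉₊:ℝ) := lt_of_lt_of_le ht2 (Nat.le_ceil _)
          have : 2 < ⌈-L⌉₊ := by exact_mod_cast h2c
          omega
        have hkcast : (k:ℝ) = (⌈-L⌉₊ : ℝ) - 3 := by
          rw [hk_def]
          push_cast [Nat.cast_sub hceil3]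
          ring
        have hkN : k ∈ Finset.range N := by
          refine Finset.mem_range.2 ?_
          have h3 : ⌈-L⌉₊ ≤ N + 1 := Nat.ceil_le.2 (by push_cast; linarith)
          omega
        have hxk : x ∈ A k := by
          have hlt : (k:ℝ) + 2 < -L := by
            have := Nat.ceil_lt_add_one (by linarith : (0:ℝ) ≤ -L)
            rw [hkcast]
            linarith
          simp only [hA_def, mem_setOf_eq]
          rw [hSL]
          exact Real.rpow_lt_rpow_of_exponent_lt one_lt_two (by linarith)
        have hFk : F x ≤ c k := by
          refine (min_le_right _ _).trans ?_
          have hge : (2:ℝ)^(-((k:ℝ)+3)) ≤ |S x| := by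
            rw [hSL]
            refine h2mono _ _ ?_
            have h5 := Nat.le_ceil (-L)
            rw [hkcast]
            linarith
          have hle2 := Real.rpow_le_rpow_of_nonpos (h2pos _) hge (neg_nonpos.2 hp0.le)
          refine hle2.trans (le_of_eq ?_)
          rw [h2pow, hc_def]
          congr 1
          ring
        exact key _ hkN hxk hFk
  -- integrability
  have hg_int : Integrable g μ := by
    refine (integrable_const (1:ℝ)).mono' hg_meas.aestronglyMeasurable ?_
    filter_upwards with x
    rw [Real.norm_eq_abs, abs_le]
    exact ⟨by linarith [(hg01 x).1], (hg01 x).2⟩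
  have hind_int : ∀ (s : Set X), MeasurableSet s → Integrable (s.indicator (fun _ => (1:ℝ))) μ :=
    fun s hs => (integrable_const (1:ℝ)).indicator hs
  have hF_int : Integrable F μ := by
    refine (integrable_const ((2*lam)^p)).mono' hF_meas.aestronglyMeasurable ?_
    filter_upwards with x
    rw [Real.norm_eq_abs, abs_le]
    exact ⟨by linarith [hF_nonneg x, Real.rpow_nonneg (by linarith : (0:ℝ) ≤ 2*lam) p], hF_le x⟩
  -- first integral inequality
  have hI1 : ∫ x, g x ∂μ ≤ (μ E).toReal + lam^(-p) * ∫ x, F x ∂μ := by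
    have hrhs_int : Integrable (fun x => E.indicator (fun _ => (1:ℝ)) x + lam^(-p) * F x) μ :=
      (hind_int E hE_meas).add (hF_int.const_mul _)
    calc ∫ x, g x ∂μ ≤ ∫ x, (E.indicator (fun _ => (1:ℝ)) x + lam^(-p) * F x) ∂μ :=
          integral_mono hg_int hrhs_int hpt1
      _ = (μ E).toReal + lam^(-p) * ∫ x, F x ∂μ := by
          rw [integral_add (hind_int E hE_meas) (hF_int.const_mul _),
            integral_indicator_const _ hE_meas, integral_const_mul]
          simp [Measure.real]
  -- second integral inequality
  have hI2 : ∫ x, F x ∂μ ≤ (4:ℝ)^p * (μ univ).toReal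
      + ∑ k ∈ Finset.range N, c k * (μ (A k)).toReal := by
    have hterm_int : ∀ k : ℕ, k ∈ Finset.range N →
        Integrable (fun x => c k * (A k).indicator (fun _ => (1:ℝ)) x) μ :=
      fun k _ => (hind_int (A k) (hA_meas k)).const_mul _
    have hrhs_int : Integrable (fun x => (4:ℝ)^p
        + ∑ k ∈ Finset.range N, c k * (A k).indicator (fun _ => (1:ℝ)) x) μ :=
      (integrable_const _).add (integrable_finset_sum _ hterm_int)
    calc ∫ x, F x ∂μ
        ≤ ∫ x, ((4:ℝ)^p + ∑ k ∈ Finset.range N, c k * (A k).indicator (fun _ => (1:ℝ)) x) ∂μ :=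
          integral_mono hF_int hrhs_int hpt2
      _ = (4:ℝ)^p * (μ univ).toReal + ∑ k ∈ Finset.range N, c k * (μ (A k)).toReal := by
          rw [integral_add (integrable_const _) (integrable_finset_sum _ hterm_int),
            integral_const, integral_finset_sum _ hterm_int]
          simp only [smul_eq_mul]
          congr 1
          · exact mul_comm _ _
          · refine Finset.sum_congr rfl fun k _ => ?_
            rw [integral_const_mul, integral_indicator_const _ (hA_meas k)]
            simp [mul_comm, Measure.real]
  -- per-term bound
  have hterm : ∀ k : ℕ, c k * (μ (A k)).toReal ≤ 2 * K₁ * q ^ k := by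
    intro k
    have hk0 : (0:ℝ) ≤ (k:ℝ) := Nat.cast_nonneg k
    have hε : (0:ℝ) < (2:ℝ)^(-((k:ℝ)+2)) := h2pos _
    have h2two : (2:ℝ)^(-(2:ℝ)) = 1/4 := by
      rw [Real.rpow_neg (by norm_num), show (2:ℝ)^(2:ℝ) = 4 by
        rw [show (2:ℝ) = ((2:ℕ):ℝ) by norm_num, Real.rpow_natCast]; norm_num]
      norm_num
    have hε2 : (2:ℝ)^(-((k:ℝ)+2)) < 1/2 := by
      have h := h2mono (-((k:ℝ)+2)) (-2) (by linarith)
      rw [h2two] at h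
      linarith
    have hμ := hsub _ hε hε2
    have hlog : Real.log (1 / (2:ℝ)^(-((k:ℝ)+2))) = ((k:ℝ)+2) * Real.log 2 := by
      rw [one_div, ← Real.rpow_neg (by norm_num), neg_neg, Real.log_rpow two_pos]
    rw [hlog] at hμ
    have hlogd : (((k:ℝ)+2) * Real.log 2)^d ≤ (1 + 1/r) * ((2:ℝ)^((k:ℝ)+2))^r := by
      rw [show ((k:ℝ)+2) * Real.log 2 = Real.log ((2:ℝ)^((k:ℝ)+2)) from
        (Real.log_rpow two_pos _).symm]
      exact aux_logd hd hr (Real.one_le_rpow one_le_two (by linarith))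
    have hμ2 : (μ (A k)).toReal ≤ K₁ * (2:ℝ)^(-((k:ℝ)+2)*δ + ((k:ℝ)+2)*r) := by
      calc (μ (A k)).toReal
          ≤ C₀ * ((2:ℝ)^(-((k:ℝ)+2)))^δ * (((k:ℝ)+2) * Real.log 2)^d := hμ
        _ ≤ C₀ * ((2:ℝ)^(-((k:ℝ)+2)))^δ * ((1+1/r) * ((2:ℝ)^((k:ℝ)+2))^r) :=
            mul_le_mul_of_nonneg_left hlogd (by positivity)
        _ = K₁ * (2:ℝ)^(-((k:ℝ)+2)*δ + ((k:ℝ)+2)*r) := by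
            rw [hK₁_def, h2pow, h2pow, Real.rpow_add two_pos]
            ring
    have hck : c k = (2:ℝ)^(((k:ℝ)+3)*p) := rfl
    have hmul : (2:ℝ)^(((k:ℝ)+3)*p) * (2:ℝ)^(-((k:ℝ)+2)*δ + ((k:ℝ)+2)*r)
        = (2:ℝ)^((((k:ℝ)+3)*p) + (-((k:ℝ)+2)*δ + ((k:ℝ)+2)*r)) :=
      (Real.rpow_add two_pos _ _).symm
    have hexp : (((k:ℝ)+3)*p) + (-((k:ℝ)+2)*δ + ((k:ℝ)+2)*r) ≤ 1 + (-r)*(k:ℝ) := by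
      rw [hr_def]
      have hk0' : (0:ℝ) ≤ (k:ℝ) := Nat.cast_nonneg k
      linarith
    have h5 : (2:ℝ)^((-r)*(k:ℝ)) = q^k := by
      rw [← h2pow, Real.rpow_natCast]
    have h6 : (2:ℝ)^(1 + (-r)*(k:ℝ)) = 2 * q^k := by
      rw [Real.rpow_add two_pos, Real.rpow_one, h5]
    calc c k * (μ (A k)).toReal
        ≤ (2:ℝ)^(((k:ℝ)+3)*p) * (K₁ * (2:ℝ)^(-((k:ℝ)+2)*δ + ((k:ℝ)+2)*r)) := by
          rw [← hck]
          exact mul_le_mul_of_nonneg_left hμ2 (hc_nonneg k)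
      _ = K₁ * ((2:ℝ)^(((k:ℝ)+3)*p) * (2:ℝ)^(-((k:ℝ)+2)*δ + ((k:ℝ)+2)*r)) :=
          mul_left_comm _ _ _
      _ = K₁ * (2:ℝ)^((((k:ℝ)+3)*p) + (-((k:ℝ)+2)*δ + ((k:ℝ)+2)*r)) := by rw [hmul]
      _ ≤ K₁ * (2:ℝ)^(1 + (-r)*(k:ℝ)) :=
          mul_le_mul_of_nonneg_left (h2mono _ _ hexp) hK₁.le
      _ = 2 * K₁ * q ^ k := by rw [h6]; ring
  -- geometric sum
  have hgeom : ∑ k ∈ Finset.range N, q ^ k ≤ 1/(1-q) := by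
    rw [geom_sum_eq (ne_of_lt hq1)]
    have hqN : 0 ≤ q ^ N := pow_nonneg hq0.le N
    have heq : (q^N - 1)/(q - 1) = (1 - q^N)/(1-q) := by
      rw [div_eq_div_iff (by linarith) (by linarith)]
      ring
    rw [heq]
    gcongr
    linarith
  -- head bound
  have hE_bound : (μ E).toReal ≤ K₁ * lam ^ (-p) := by
    have hε : (0:ℝ) < 1/(2*lam) := by positivity
    have hε2 : 1/(2*lam) < 1/2 := by
      rw [div_lt_div_iff₀ (by linarith) (by norm_num)]
      linarith
    have hμ := hsub _ hε hε2
    have h2l : (1:ℝ)/(1/(2*lam)) = 2*lam := by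
      field_simp
    rw [h2l] at hμ
    have hlogd : Real.log (2*lam) ^ d ≤ (1+1/r) * (2*lam)^r := aux_logd hd hr (by linarith)
    have hεδ : (1/(2*lam))^δ = (2*lam)^(-δ) := by
      rw [one_div, Real.inv_rpow (by linarith), ← Real.rpow_neg (by linarith)]
    rw [hεδ] at hμ
    have hmul2 : (2*lam)^(-δ) * (2*lam)^r = (2*lam)^(-δ + r) :=
      (Real.rpow_add (by linarith) _ _).symm
    calc (μ E).toReal ≤ C₀ * (2*lam)^(-δ) * Real.log (2*lam) ^ d := hμ
      _ ≤ C₀ * (2*lam)^(-δ) * ((1+1/r) * (2*lam)^r) := by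
          refine mul_le_mul_of_nonneg_left hlogd ?_
          have := Real.rpow_nonneg (by linarith : (0:ℝ) ≤ 2*lam) (-δ)
          positivity
      _ = K₁ * ((2*lam)^(-δ) * (2*lam)^r) := by rw [hK₁_def]; ring
      _ = K₁ * (2*lam)^(-δ + r) := by rw [hmul2]
      _ ≤ K₁ * (2*lam)^(-p) := by
          refine mul_le_mul_of_nonneg_left
            (Real.rpow_le_rpow_of_exponent_le (by linarith) ?_) hK₁.le
          rw [hr_def]
          linarith
      _ ≤ K₁ * lam^(-p) :=
          mul_le_mul_of_nonneg_left
            (Real.rpow_le_rpow_of_nonpos hlam0 (by linarith) (by linarith)) hK₁.le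
  -- assemble
  have hIF : ∫ x, F x ∂μ ≤ (4:ℝ)^p * (μ univ).toReal + 2*K₁*(1/(1-q)) := by
    refine hI2.trans ?_
    have hsum : ∑ k ∈ Finset.range N, c k * (μ (A k)).toReal ≤ 2*K₁*(1/(1-q)) := by
      calc ∑ k ∈ Finset.range N, c k * (μ (A k)).toReal
          ≤ ∑ k ∈ Finset.range N, 2*K₁*q^k := Finset.sum_le_sum fun k _ => hterm k
        _ = 2*K₁ * ∑ k ∈ Finset.range N, q^k := by rw [Finset.mul_sum]
        _ ≤ 2*K₁*(1/(1-q)) := mul_le_mul_of_nonneg_left hgeom (by positivity)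
    linarith
  calc ∫ x, g x ∂μ ≤ (μ E).toReal + lam^(-p) * ∫ x, F x ∂μ := hI1
    _ ≤ K₁ * lam^(-p) + lam^(-p) * ((4:ℝ)^p * (μ univ).toReal + 2*K₁*(1/(1-q))) :=
        add_le_add hE_bound (mul_le_mul_of_nonneg_left hIF hlamp)
    _ = C * lam^(-p) := by rw [hC_def]; ring
end

section
/- Let (X,μ) be a finite measure space, S : X → ℝ measurable, and suppose there are constants C₀ > 0, δ > 0 and d ∈ {0,1} such that μ({x : |S(x)| < ε}) ≤ C₀ ε^δ (ln(1/ε))^d for all 0 < ε < 1/2. Let p ∈ (0,1] and suppose δ = p. Then there is a constant C > 0, depending only on C₀, δ, d, p and μ(X), such that for all λ ≥ 2, ∫_X min(1, (λ|S(x)|)^{-p}) dμ(x) ≤ C λ^{-p} (ln λ)^{d+1}. -/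
open MeasureTheory Topology Filter Set

set_option maxHeartbeats 2000000 in
/-- The measure-theoretic estimate of equations (3.24)–(3.31):
from the sublevel bound `μ{|S|<ε} ≤ C₀ ε^δ (ln(1/ε))^d` one gets a bound on
`∫ min(1, (λ|S|)^{-p}) dμ` (the minimum interpreted as 1 where `S = 0`). -/
theorem stmt_8 {X : Type*} [MeasurableSpace X] (μ : Measure X) [IsFiniteMeasure μ]
    (S : X → ℝ) (hS : Measurable S)
    (C₀ δ : ℝ) (d : ℕ) (hC₀ : 0 < C₀) (hδ : 0 < δ) (hd : d ≤ 1)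
    (hsub : ∀ ε : ℝ, 0 < ε → ε < 1 / 2 →
      (μ {x | |S x| < ε}).toReal ≤ C₀ * ε ^ δ * Real.log (1 / ε) ^ d)
    (p : ℝ) (hp0 : 0 < p) (hp1 : p ≤ 1) (hδp : δ = p) :
    ∃ C > (0 : ℝ), ∀ lam : ℝ, 2 ≤ lam →
      (∫ x, (if S x = 0 then (1 : ℝ) else min 1 ((lam * |S x|) ^ (-p))) ∂μ) ≤
        C * lam ^ (-p) * Real.log lam ^ (d + 1) := by
  rw [hδp] at hsub
  set M := (μ Set.univ).toReal with hMdef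
  have hM0 : 0 ≤ M := ENNReal.toReal_nonneg
  have hlog2 : 0 < Real.log 2 := Real.log_pos one_lt_two
  have hlog2_le1 : Real.log 2 ≤ 1 := by
    have := Real.log_le_sub_one_of_pos (two_pos (α := ℝ))
    linarith
  refine ⟨2 * M / Real.log 2 ^ 2 + C₀, by positivity, ?_⟩
  intro lam hlam
  have hlam0 : (0 : ℝ) < lam := lt_of_lt_of_le two_pos hlam
  have hloglam : Real.log 2 ≤ Real.log lam := Real.log_le_log two_pos hlam
  have hloglam0 : 0 < Real.log lam := lt_of_lt_of_le hlog2 hloglam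
  set f : X → ℝ := fun x => if S x = 0 then (1 : ℝ) else min 1 ((lam * |S x|) ^ (-p))
    with hfdef
  have hf_meas : Measurable f := by
    apply Measurable.ite (measurableSet_eq_fun hS measurable_const) measurable_const
    exact measurable_const.min (by measurability)
  have hf_nn : ∀ x, 0 ≤ f x := by
    intro x
    by_cases h : S x = 0
    · simp [hfdef, h]
    · simp only [hfdef, h, if_false, le_min_iff]
      exact ⟨zero_le_one, Real.rpow_nonneg (by positivity) _⟩
  have hf_le1 : ∀ x, f x ≤ 1 := by
    intro x
    by_cases h : S x = 0 <;> simp [hfdef, h, min_le_left]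
  have hf_int : Integrable f μ :=
    (integrable_const (1 : ℝ)).mono' hf_meas.aestronglyMeasurable
      (Filter.Eventually.of_forall fun x => by
        rw [Real.norm_eq_abs, abs_of_nonneg (hf_nn x)]; exact hf_le1 x)
  -- the sublevel-set inclusion
  have hincl : ∀ t : ℝ, 0 < t →
      {x | t < f x} ⊆ {x | |S x| < lam⁻¹ * t ^ (-(1 / p))} := by
    intro t ht x hx
    simp only [Set.mem_setOf_eq] at hx ⊢
    by_cases h : S x = 0
    · rw [h, abs_zero]
      positivity
    · simp only [hfdef, h, if_false] at hx
      have h1 : t < (lam * |S x|) ^ (-p) := lt_of_lt_of_le hx (min_le_right _ _)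
      have hy : 0 < lam * |S x| := by
        have := abs_pos.mpr h; positivity
      have h2 : ((lam * |S x|) ^ (-p)) ^ (-(1 / p)) < t ^ (-(1 / p)) :=
        Real.rpow_lt_rpow_of_neg ht h1 (neg_lt_zero.mpr (by positivity))
      have h3 : ((lam * |S x|) ^ (-p)) ^ (-(1 / p)) = lam * |S x| := by
        rw [← Real.rpow_mul hy.le]
        rw [show (-p) * (-(1 / p)) = 1 by field_simp]
        exact Real.rpow_one _
      rw [h3] at h2
      calc |S x| = lam⁻¹ * (lam * |S x|) := by field_simp
        _ < lam⁻¹ * t ^ (-(1 / p)) := (mul_lt_mul_iff_right₀ (by positivity)).mpr h2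
  -- constants
  set a : ℝ := (2 / lam) ^ p with hadef
  have ha0 : 0 < a := Real.rpow_pos_of_pos (by positivity) p
  have ha1 : a ≤ 1 := Real.rpow_le_one (by positivity) (by
    rw [div_le_one hlam0]; exact hlam) hp0.le
  set B : ℝ := C₀ * lam ^ (-p) * Real.log lam ^ d with hBdef
  have hB0 : 0 ≤ B := by
    have : (0:ℝ) ≤ lam ^ (-p) := (Real.rpow_pos_of_pos hlam0 _).le
    positivity
  -- the key bound on (a, 1]
  have hkey : ∀ t ∈ Set.Ioc a 1, μ {x | t < f x} ≤ ENNReal.ofReal (B * t⁻¹) := by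
    intro t ht
    obtain ⟨hta, ht1⟩ := ht
    have ht0 : 0 < t := ha0.trans hta
    set ε : ℝ := lam⁻¹ * t ^ (-(1 / p)) with hεdef
    have hε0 : 0 < ε := by positivity
    have htp : 2 / lam < t ^ (1 / p) := by
      have := Real.rpow_lt_rpow ha0.le hta (by positivity : 0 < 1 / p)
      rwa [hadef, ← Real.rpow_mul (by positivity : (0:ℝ) ≤ 2 / lam),
        mul_one_div_cancel hp0.ne', Real.rpow_one] at this
    have hε : ε < 1 / 2 := by
      have h1 : t ^ (-(1 / p)) = (t ^ (1 / p))⁻¹ := by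
        rw [Real.rpow_neg ht0.le]
      have h2 : (t ^ (1 / p))⁻¹ < (2 / lam)⁻¹ := by
        apply inv_strictAnti₀ (by positivity) htp
      rw [hεdef, h1]
      calc lam⁻¹ * (t ^ (1 / p))⁻¹ < lam⁻¹ * (2 / lam)⁻¹ :=
            (mul_lt_mul_iff_right₀ (by positivity)).mpr h2
        _ = 1 / 2 := by field_simp
    have hμ := hsub ε hε0 hε
    -- ε ^ p = lam ^ (-p) * t⁻¹
    have hεp : ε ^ p = lam ^ (-p) * t⁻¹ := by
      rw [hεdef, Real.mul_rpow (by positivity) (by positivity),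
        Real.inv_rpow hlam0.le, ← Real.rpow_neg hlam0.le,
        ← Real.rpow_mul ht0.le, show (-(1 / p)) * p = -1 by field_simp,
        Real.rpow_neg_one]
    -- log (1/ε) ≤ log lam
    have hinv : 1 / ε ≤ lam := by
      have htle : t ^ (1 / p) ≤ 1 := Real.rpow_le_one ht0.le ht1 (by positivity)
      have : 1 / ε = lam * t ^ (1 / p) := by
        rw [hεdef, Real.rpow_neg ht0.le]
        field_simp
      rw [this]
      nlinarith [Real.rpow_pos_of_pos ht0 (1 / p)]
    have hlognn : 0 ≤ Real.log (1 / ε) := by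
      apply Real.log_nonneg
      rw [le_div_iff₀ hε0, one_mul]
      linarith
    have hlogle : Real.log (1 / ε) ≤ Real.log lam :=
      Real.log_le_log (by positivity) hinv
    have hcomp : C₀ * ε ^ p * Real.log (1 / ε) ^ d ≤ B * t⁻¹ := by
      rw [hεp, hBdef]
      have h4 : Real.log (1 / ε) ^ d ≤ Real.log lam ^ d :=
        pow_le_pow_left₀ hlognn hlogle d
      have h5 : 0 ≤ lam ^ (-p) := (Real.rpow_pos_of_pos hlam0 _).le
      have h6 : 0 ≤ t⁻¹ := by positivity
      nlinarith [mul_nonneg (mul_nonneg hC₀.le h5) h6]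
    calc μ {x | t < f x} ≤ μ {x | |S x| < ε} := measure_mono (hincl t ht0)
      _ = ENNReal.ofReal ((μ {x | |S x| < ε}).toReal) :=
          (ENNReal.ofReal_toReal (measure_ne_top μ _)).symm
      _ ≤ ENNReal.ofReal (B * t⁻¹) := ENNReal.ofReal_le_ofReal (hμ.trans hcomp)
  -- layer cake
  have hlayer : ∫⁻ x, ENNReal.ofReal (f x) ∂μ = ∫⁻ t in Set.Ioi (0:ℝ), μ {x | t < f x} :=
    lintegral_eq_lintegral_meas_lt μ (ae_of_all _ hf_nn) hf_meas.aemeasurable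
  -- split the domain
  have hsplit : ∫⁻ t in Set.Ioi (0:ℝ), μ {x | t < f x}
      = (∫⁻ t in Set.Ioc 0 a, μ {x | t < f x})
        + (∫⁻ t in Set.Ioc a 1, μ {x | t < f x})
        + (∫⁻ t in Set.Ioi (1:ℝ), μ {x | t < f x}) := by
    rw [← Set.Ioc_union_Ioi_eq_Ioi ha0.le,
      lintegral_union (measurableSet_Ioi) (Set.Ioc_disjoint_Ioi le_rfl),
      ← Set.Ioc_union_Ioi_eq_Ioi ha1,
      lintegral_union (measurableSet_Ioi) (Set.Ioc_disjoint_Ioi le_rfl), add_assoc]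
  -- piece 1
  have hT1 : (∫⁻ t in Set.Ioc 0 a, μ {x | t < f x}) ≤ μ Set.univ * ENNReal.ofReal a := by
    calc (∫⁻ t in Set.Ioc 0 a, μ {x | t < f x})
        ≤ ∫⁻ _ in Set.Ioc 0 a, μ Set.univ :=
          lintegral_mono fun t => measure_mono (Set.subset_univ _)
      _ = μ Set.univ * ENNReal.ofReal a := by
          rw [setLIntegral_const, Real.volume_Ioc, sub_zero]
  -- piece 2
  have hcont : ContinuousOn (fun t : ℝ => B * t⁻¹) (Set.Icc a 1) :=
    continuousOn_const.mul (continuousOn_id.inv₀ fun t ht =>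
      ne_of_gt (lt_of_lt_of_le ha0 ht.1))
  have hIntOn : IntegrableOn (fun t : ℝ => B * t⁻¹) (Set.Ioc a 1) :=
    (hcont.integrableOn_Icc).mono_set Set.Ioc_subset_Icc_self
  have hT2 : (∫⁻ t in Set.Ioc a 1, μ {x | t < f x})
      ≤ ENNReal.ofReal (B * Real.log lam) := by
    calc (∫⁻ t in Set.Ioc a 1, μ {x | t < f x})
        ≤ ∫⁻ t in Set.Ioc a 1, ENNReal.ofReal (B * t⁻¹) :=
          setLIntegral_mono ((measurable_const.mul measurable_inv).ennreal_ofReal) hkey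
      _ = ENNReal.ofReal (∫ t in Set.Ioc a 1, B * t⁻¹) := by
          rw [ofReal_integral_eq_lintegral_ofReal hIntOn
            ((ae_restrict_iff' measurableSet_Ioc).mpr (ae_of_all _ fun t ht => by
              have ht0 : 0 < t := ha0.trans ht.1
              positivity))]
      _ ≤ ENNReal.ofReal (B * Real.log lam) := by
          apply ENNReal.ofReal_le_ofReal
          have hI : ∫ t in Set.Ioc a 1, B * t⁻¹ = B * Real.log a⁻¹ := by
            rw [← intervalIntegral.integral_of_le ha1,
              intervalIntegral.integral_const_mul, integral_inv (by
                rw [Set.uIcc_of_le ha1]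
                intro h0
                exact absurd h0.1 (not_le.mpr ha0)), one_div]
          rw [hI]
          have hloga : Real.log a⁻¹ = p * Real.log (lam / 2) := by
            rw [Real.log_inv, hadef, Real.log_rpow (by positivity : (0:ℝ) < 2 / lam),
              show lam / 2 = (2 / lam)⁻¹ by rw [inv_div], Real.log_inv]
            ring
          have h7 : Real.log (lam / 2) ≤ Real.log lam :=
            Real.log_le_log (by positivity) (by linarith)
          have h8 : 0 ≤ Real.log (lam / 2) :=
            Real.log_nonneg (by rw [le_div_iff₀ two_pos, one_mul]; exact hlam)
          have hle : Real.log a⁻¹ ≤ Real.log lam := by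
            rw [hloga]
            calc p * Real.log (lam / 2) ≤ 1 * Real.log lam :=
                  mul_le_mul hp1 h7 h8 zero_le_one
              _ = Real.log lam := one_mul _
          exact mul_le_mul_of_nonneg_left hle hB0
  -- piece 3
  have hT3 : (∫⁻ t in Set.Ioi (1:ℝ), μ {x | t < f x}) = 0 := by
    rw [setLIntegral_congr_fun measurableSet_Ioi
      (fun ⦃t⦄ (ht : 1 < t) => ?_), lintegral_zero]
    have : {x | t < f x} = ∅ := by
      ext x
      simp only [Set.mem_setOf_eq, Set.mem_empty_iff_false, iff_false, not_lt]
      exact (hf_le1 x).trans ht.le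
    rw [this, measure_empty]
  -- put it together at the level of lintegrals
  have hbound : ∫⁻ x, ENNReal.ofReal (f x) ∂μ
      ≤ μ Set.univ * ENNReal.ofReal a + ENNReal.ofReal (B * Real.log lam) := by
    rw [hlayer, hsplit, hT3, add_zero]
    exact add_le_add hT1 hT2
  -- convert back to Bochner integral
  have hreal : ∫ x, f x ∂μ = (∫⁻ x, ENNReal.ofReal (f x) ∂μ).toReal := by
    rw [integral_eq_lintegral_of_nonneg_ae (ae_of_all _ hf_nn)
      hf_meas.aestronglyMeasurable]
  have hfin : μ Set.univ * ENNReal.ofReal a + ENNReal.ofReal (B * Real.log lam) ≠ ⊤ :=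
    ENNReal.add_ne_top.mpr ⟨ENNReal.mul_ne_top (measure_ne_top μ _) ENNReal.ofReal_ne_top,
      ENNReal.ofReal_ne_top⟩
  have hmain : ∫ x, f x ∂μ ≤ M * a + B * Real.log lam := by
    rw [hreal]
    calc (∫⁻ x, ENNReal.ofReal (f x) ∂μ).toReal
        ≤ (μ Set.univ * ENNReal.ofReal a + ENNReal.ofReal (B * Real.log lam)).toReal :=
          ENNReal.toReal_mono hfin hbound
      _ = M * a + B * Real.log lam := by
          rw [ENNReal.toReal_add (ENNReal.mul_ne_top (measure_ne_top μ _)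
              ENNReal.ofReal_ne_top) ENNReal.ofReal_ne_top,
            ENNReal.toReal_mul, ENNReal.toReal_ofReal ha0.le,
            ENNReal.toReal_ofReal (mul_nonneg hB0 hloglam0.le), hMdef]
  -- final arithmetic
  have hEq : (∫ x, (if S x = 0 then (1 : ℝ) else min 1 ((lam * |S x|) ^ (-p))) ∂μ)
      = ∫ x, f x ∂μ := rfl
  rw [hEq]
  apply hmain.trans
  have hlp : 0 < lam ^ (-p) := Real.rpow_pos_of_pos hlam0 _
  have haa : a ≤ 2 * lam ^ (-p) := by
    have h1 : a = 2 ^ p * lam ^ (-p) := by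
      rw [hadef, Real.div_rpow (by norm_num) hlam0.le, Real.rpow_neg hlam0.le,
        div_eq_mul_inv]
    have h2 : (2:ℝ) ^ p ≤ 2 := by
      calc (2:ℝ) ^ p ≤ 2 ^ (1:ℝ) := Real.rpow_le_rpow_of_exponent_le one_le_two hp1
        _ = 2 := Real.rpow_one 2
    rw [h1]
    exact mul_le_mul_of_nonneg_right h2 hlp.le
  have hL2 : Real.log 2 ^ 2 ≤ Real.log lam ^ (d + 1) := by
    calc Real.log 2 ^ 2 ≤ Real.log 2 ^ (d + 1) := by
          apply pow_le_pow_of_le_one hlog2.le hlog2_le1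
          omega
      _ ≤ Real.log lam ^ (d + 1) := pow_le_pow_left₀ hlog2.le hloglam _
  have hBL : B * Real.log lam = C₀ * lam ^ (-p) * Real.log lam ^ (d + 1) := by
    rw [hBdef, pow_succ]
    ring
  rw [hBL]
  have h9 : M * a ≤ 2 * M * lam ^ (-p) := by
    calc M * a ≤ M * (2 * lam ^ (-p)) := mul_le_mul_of_nonneg_left haa hM0
      _ = 2 * M * lam ^ (-p) := by ring
  have h10 : 2 * M * lam ^ (-p)
      ≤ 2 * M / Real.log 2 ^ 2 * lam ^ (-p) * Real.log lam ^ (d + 1) := by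
    have hq : (1:ℝ) ≤ Real.log lam ^ (d + 1) / Real.log 2 ^ 2 :=
      (one_le_div (by positivity)).mpr hL2
    calc 2 * M * lam ^ (-p) = 2 * M * lam ^ (-p) * 1 := (mul_one _).symm
      _ ≤ 2 * M * lam ^ (-p) * (Real.log lam ^ (d + 1) / Real.log 2 ^ 2) :=
          mul_le_mul_of_nonneg_left hq (by
            have h2M : (0:ℝ) ≤ 2 * M := by linarith
            exact mul_nonneg h2M hlp.le)
      _ = 2 * M / Real.log 2 ^ 2 * lam ^ (-p) * Real.log lam ^ (d + 1) := by ring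
  have hexp : (2 * M / Real.log 2 ^ 2 + C₀) * lam ^ (-p) * Real.log lam ^ (d + 1)
      = 2 * M / Real.log 2 ^ 2 * lam ^ (-p) * Real.log lam ^ (d + 1)
        + C₀ * lam ^ (-p) * Real.log lam ^ (d + 1) := by ring
  rw [hexp]
  linarith
end

section
/- Let a, b, a', b' be nonnegative real numbers and let 0 < M ≤ m be real numbers. Suppose a' + M b' ≥ a + M b and a' + m b' ≥ a + m b. Then for all real x, y with 0 < x < 1 and x^m ≤ y ≤ x^M, one has x^{a'} y^{b'} ≤ x^{a} y^{b}. -/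
/-- The monomial comparison underlying Lemma 5.1: if the exponent pair `(a',b')`
lies on or above the supporting lines of `(a,b)` at slopes `M` and `m`, then
`x^{a'} y^{b'} ≤ x^a y^b` for `0 < x < 1` and `x^m ≤ y ≤ x^M`. -/
theorem stmt_9 (a b a' b' M m : ℝ)
    (ha : 0 ≤ a) (hb : 0 ≤ b) (ha' : 0 ≤ a') (hb' : 0 ≤ b')
    (hM : 0 < M) (hMm : M ≤ m)
    (h1 : a + M * b ≤ a' + M * b') (h2 : a + m * b ≤ a' + m * b') :
    ∀ x y : ℝ, 0 < x → x < 1 → x ^ m ≤ y → y ≤ x ^ M →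
      x ^ a' * y ^ b' ≤ x ^ a * y ^ b := by
  intro x y hx hx1 hle hge
  have hy : 0 < y := lt_of_lt_of_le (Real.rpow_pos_of_pos hx m) hle
  rcases le_total b b' with hbb | hbb
  · have h3 : y ^ (b' - b) ≤ x ^ (M * (b' - b)) := by
      rw [Real.rpow_mul hx.le]
      exact Real.rpow_le_rpow hy.le hge (sub_nonneg.2 hbb)
    calc x ^ a' * y ^ b' = x ^ a' * (y ^ (b' - b) * y ^ b) := by
          rw [← Real.rpow_add hy]; ring_nf
      _ ≤ x ^ a' * (x ^ (M * (b' - b)) * y ^ b) := by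
          have := Real.rpow_nonneg hy.le b
          have := Real.rpow_nonneg hx.le a'
          nlinarith [Real.rpow_nonneg hy.le b, mul_le_mul_of_nonneg_right h3 (Real.rpow_nonneg hy.le b)]
      _ = x ^ (a' + M * (b' - b)) * y ^ b := by rw [Real.rpow_add hx]; ring
      _ ≤ x ^ a * y ^ b := by
          have : x ^ (a' + M * (b' - b)) ≤ x ^ a :=
            Real.rpow_le_rpow_of_exponent_ge hx hx1.le (by nlinarith)
          exact mul_le_mul_of_nonneg_right this (Real.rpow_nonneg hy.le b)
  · have h3 : x ^ (m * (b - b')) ≤ y ^ (b - b') := by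
      rw [Real.rpow_mul hx.le]
      exact Real.rpow_le_rpow (Real.rpow_pos_of_pos hx m).le hle (sub_nonneg.2 hbb)
    have h4 : x ^ a' ≤ x ^ (a + m * (b - b')) :=
      Real.rpow_le_rpow_of_exponent_ge hx hx1.le (by nlinarith)
    calc x ^ a' * y ^ b' ≤ x ^ (a + m * (b - b')) * y ^ b' :=
          mul_le_mul_of_nonneg_right h4 (Real.rpow_nonneg hy.le b')
      _ = x ^ a * (x ^ (m * (b - b')) * y ^ b') := by rw [Real.rpow_add hx]; ring
      _ ≤ x ^ a * (y ^ (b - b') * y ^ b') := by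
          have := mul_le_mul_of_nonneg_right h3 (Real.rpow_nonneg hy.le b')
          exact mul_le_mul_of_nonneg_left this (Real.rpow_pos_of_pos hx a).le
      _ = x ^ a * y ^ b := by rw [← Real.rpow_add hy]; ring_nf
end

section
/- Let f(x,y) = Σ_{(j,k) ∈ ℕ×ℕ} c_{jk} x^j y^k be a power series with real coefficients, not identically zero, converging absolutely for |x|, |y| ≤ ρ for some ρ > 0. Let M > 0 be a real number and let A = min{ j + M k : c_{jk} ≠ 0 }. Then for every real y, lim_{x → 0⁺} f(x, x^M y) / x^A = Σ_{{(j,k) : j + M k = A}} c_{jk} y^k. -/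
open Filter Topology Set

/-- The limit (5.5): after the scaling `y ↦ x^M y`, the normalized series
`f(x, x^M y)/x^A` tends, as `x → 0⁺`, to the weighted-homogeneous polynomial
consisting of the terms with `j + Mk = A` minimal. -/
theorem stmt_10 (c : ℕ × ℕ → ℝ) (hc : ∃ jk, c jk ≠ 0)
    (ρ : ℝ) (hρ : 0 < ρ)
    (hsum : Summable (fun jk : ℕ × ℕ => |c jk| * ρ ^ jk.1 * ρ ^ jk.2))
    (M : ℝ) (hM : 0 < M)
    (A : ℝ) (hA : A = sInf {a : ℝ | ∃ jk : ℕ × ℕ, c jk ≠ 0 ∧ a = (jk.1 : ℝ) + M * (jk.2 : ℝ)}) :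
    ∀ y : ℝ,
      Tendsto (fun x : ℝ => (∑' jk : ℕ × ℕ, c jk * x ^ jk.1 * (x ^ M * y) ^ jk.2) / x ^ A)
        (𝓝[>] 0)
        (𝓝 (∑' jk : ℕ × ℕ,
          if (jk.1 : ℝ) + M * (jk.2 : ℝ) = A then c jk * y ^ jk.2 else 0)) := by
  intro y
  have hSbdd : BddBelow {a : ℝ | ∃ jk : ℕ × ℕ, c jk ≠ 0 ∧ a = (jk.1 : ℝ) + M * (jk.2 : ℝ)} := by
    refine ⟨0, ?_⟩
    rintro a ⟨jk, -, rfl⟩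
    positivity
  have hAle : ∀ jk : ℕ × ℕ, c jk ≠ 0 → A ≤ (jk.1 : ℝ) + M * (jk.2 : ℝ) := by
    intro jk h
    rw [hA]
    exact csInf_le hSbdd ⟨jk, h, rfl⟩
  -- choose ε
  set ε : ℝ := min ρ ((ρ / (1 + |y|)) ^ (1 / M)) with hεdef
  have hpos : (0 : ℝ) < ρ / (1 + |y|) := div_pos hρ (by positivity)
  have hε0 : 0 < ε := lt_min hρ (Real.rpow_pos_of_pos hpos _)
  have hερ : ε ≤ ρ := min_le_left _ _
  have hεM : ε ^ M * |y| ≤ ρ := by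
    have h1 : ε ^ M ≤ ((ρ / (1 + |y|)) ^ (1 / M)) ^ M :=
      Real.rpow_le_rpow hε0.le (min_le_right _ _) hM.le
    have h2 : ((ρ / (1 + |y|)) ^ (1 / M)) ^ M = ρ / (1 + |y|) := by
      rw [← Real.rpow_mul hpos.le, one_div, inv_mul_cancel₀ hM.ne', Real.rpow_one]
    have h3 : ε ^ M * |y| ≤ (ρ / (1 + |y|)) * |y| := by
      apply mul_le_mul_of_nonneg_right _ (abs_nonneg y)
      rw [← h2]; exact h1
    refine h3.trans ?_
    rw [div_mul_eq_mul_div, div_le_iff₀ (by positivity)]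
    nlinarith [abs_nonneg y]
  -- the transformed family
  set g : ℝ → ℕ × ℕ → ℝ :=
    fun x jk => c jk * y ^ jk.2 * x ^ ((jk.1 : ℝ) + M * (jk.2 : ℝ) - A) with hg
  set bound : ℕ × ℕ → ℝ :=
    fun jk => |c jk| * ρ ^ jk.1 * ρ ^ jk.2 * ε ^ (-A) with hbound
  have hmem : ∀ᶠ x in 𝓝[>] (0:ℝ), x ∈ Ioo (0:ℝ) ε := by
    have : Ioo (0:ℝ) ε ∈ 𝓝[>] (0:ℝ) := Ioo_mem_nhdsGT_of_mem ⟨le_refl 0, hε0⟩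
    exact this
  -- key rpow computation for 0 < x
  have hterm : ∀ x : ℝ, 0 < x → ∀ jk : ℕ × ℕ,
      c jk * x ^ jk.1 * (x ^ M * y) ^ jk.2 / x ^ A = g x jk := by
    intro x hx jk
    obtain ⟨j, k⟩ := jk
    have h1 : (x ^ M) ^ k = x ^ (M * (k : ℝ)) := by
      rw [← Real.rpow_natCast (x ^ M) k, ← Real.rpow_mul hx.le]
    have h2 : x ^ j = x ^ (j : ℝ) := (Real.rpow_natCast x j).symm
    have h3 : x ^ (j : ℝ) * x ^ (M * (k : ℝ)) / x ^ A
        = x ^ ((j : ℝ) + M * (k : ℝ) - A) := by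
      rw [← Real.rpow_add hx, ← Real.rpow_sub hx]
    calc c (j, k) * x ^ j * (x ^ M * y) ^ k / x ^ A
        = c (j, k) * y ^ k * (x ^ (j : ℝ) * x ^ (M * (k : ℝ)) / x ^ A) := by
          rw [mul_pow, h1, h2]; ring
      _ = g x (j, k) := by rw [h3]
  -- pointwise limits
  have hab : ∀ jk : ℕ × ℕ, Tendsto (fun x => g x jk) (𝓝[>] (0:ℝ))
      (𝓝 (if (jk.1 : ℝ) + M * (jk.2 : ℝ) = A then c jk * y ^ jk.2 else 0)) := by
    intro jk
    by_cases hcjk : c jk = 0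
    · simp only [hg, hcjk, zero_mul, if_pos, if_neg]
      simpa [hcjk] using (tendsto_const_nhds :
        Tendsto (fun _ : ℝ => (0:ℝ)) (𝓝[>] (0:ℝ)) (𝓝 0))
    · by_cases heq : (jk.1 : ℝ) + M * (jk.2 : ℝ) = A
      · rw [if_pos heq]
        simp only [hg, heq, sub_self, Real.rpow_zero, mul_one]
        exact tendsto_const_nhds
      · rw [if_neg heq]
        have he : 0 < (jk.1 : ℝ) + M * (jk.2 : ℝ) - A :=
          sub_pos.mpr (lt_of_le_of_ne (hAle jk hcjk) (Ne.symm heq))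
        have h0 : Tendsto (fun x : ℝ => x ^ ((jk.1 : ℝ) + M * (jk.2 : ℝ) - A))
            (𝓝[>] (0:ℝ)) (𝓝 0) := by
          have := (Real.continuousAt_rpow_const 0 _ (Or.inr he.le)).tendsto
          rw [Real.zero_rpow he.ne'] at this
          exact this.mono_left nhdsWithin_le_nhds
        simpa using h0.const_mul (c jk * y ^ jk.2)
  -- the bound
  have h_sum : Summable bound := (hsum.mul_right _)
  have h_bound : ∀ᶠ x in 𝓝[>] (0:ℝ), ∀ jk : ℕ × ℕ, ‖g x jk‖ ≤ bound jk := by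
    filter_upwards [hmem] with x hx jk
    by_cases hcjk : c jk = 0
    · simp [hg, hbound, hcjk]
    · have he : (0:ℝ) ≤ (jk.1 : ℝ) + M * (jk.2 : ℝ) - A := sub_nonneg.mpr (hAle jk hcjk)
      have hxε : x ^ ((jk.1 : ℝ) + M * (jk.2 : ℝ) - A) ≤ ε ^ ((jk.1 : ℝ) + M * (jk.2 : ℝ) - A) :=
        Real.rpow_le_rpow hx.1.le hx.2.le he
      have hεe : ε ^ ((jk.1 : ℝ) + M * (jk.2 : ℝ) - A)
          = ε ^ jk.1 * (ε ^ M) ^ jk.2 * ε ^ (-A) := by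
        rw [← Real.rpow_natCast (ε ^ M) jk.2, ← Real.rpow_mul hε0.le,
          ← Real.rpow_natCast ε jk.1, ← Real.rpow_add hε0, ← Real.rpow_add hε0]
        ring_nf
      have hnorm : ‖g x jk‖ = |c jk| * |y| ^ jk.2 * x ^ ((jk.1 : ℝ) + M * (jk.2 : ℝ) - A) := by
        rw [hg]
        rw [Real.norm_eq_abs, abs_mul, abs_mul, abs_pow,
          abs_of_pos (Real.rpow_pos_of_pos hx.1 _)]
      rw [hnorm]
      have key : |c jk| * |y| ^ jk.2 * ε ^ ((jk.1 : ℝ) + M * (jk.2 : ℝ) - A) ≤ bound jk := by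
        rw [hεe, hbound]
        have h4 : |y| ^ jk.2 * (ε ^ jk.1 * (ε ^ M) ^ jk.2)
            = ε ^ jk.1 * (ε ^ M * |y|) ^ jk.2 := by rw [mul_pow]; ring
        have h5 : ε ^ jk.1 * (ε ^ M * |y|) ^ jk.2 ≤ ρ ^ jk.1 * ρ ^ jk.2 := by
          apply mul_le_mul (pow_le_pow_left₀ hε0.le hερ _)
            (pow_le_pow_left₀ (by positivity) hεM _) (by positivity) (by positivity)
        calc |c jk| * |y| ^ jk.2 * (ε ^ jk.1 * (ε ^ M) ^ jk.2 * ε ^ (-A))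
            = |c jk| * (ε ^ jk.1 * (ε ^ M * |y|) ^ jk.2) * ε ^ (-A) := by rw [← h4]; ring
          _ ≤ |c jk| * (ρ ^ jk.1 * ρ ^ jk.2) * ε ^ (-A) := by
              apply mul_le_mul_of_nonneg_right _ (Real.rpow_pos_of_pos hε0 _).le
              exact mul_le_mul_of_nonneg_left h5 (abs_nonneg _)
          _ = |c jk| * ρ ^ jk.1 * ρ ^ jk.2 * ε ^ (-A) := by ring
      refine le_trans ?_ key
      exact mul_le_mul_of_nonneg_left hxε (by positivity)
  have main := tendsto_tsum_of_dominated_convergence h_sum hab h_bound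
  apply main.congr'
  filter_upwards [hmem] with x hx
  rw [← tsum_div_const]
  exact tsum_congr fun jk => (hterm x hx.1 jk).symm
end

section
/- Let (X,μ) be a finite measure space and S : X → ℝ measurable. Suppose there are constants D > 0, δ₀ > 0 and d₀ ∈ {0,1} such that μ({x : |S(x)| < t}) = D t^{δ₀} (ln(1/t))^{d₀} + o(t^{δ₀} (ln(1/t))^{d₀}) as t → 0⁺, and let α > -δ₀ be a real number. Then ∫_{{x : |S(x)| < ε}} |S(x)|^α dμ(x) = (δ₀ D / (α + δ₀)) ε^{α+δ₀} (ln(1/ε))^{d₀} + o(ε^{α+δ₀} (ln(1/ε))^{d₀}) as ε → 0⁺. -/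
open MeasureTheory Topology Filter Set Asymptotics

lemma aux_integrableOn_rpow {r : ℝ} (hr : -1 < r) {ε : ℝ} (hε : 0 < ε) :
    IntegrableOn (fun s : ℝ => s ^ r) (Set.Ioo 0 ε) := by
  have h := intervalIntegral.intervalIntegrable_rpow' (a := 0) (b := ε) hr
  rw [intervalIntegrable_iff_integrableOn_Ioc_of_le hε.le] at h
  exact h.mono_set Set.Ioo_subset_Ioc_self

lemma aux_tendsto_rpow_const :
    ∀ {q : ℝ}, 0 < q → Tendsto (fun t : ℝ => t ^ q) (𝓝[>] 0) (𝓝 0) := by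
  intro q hq
  have h : Tendsto (fun t : ℝ => t ^ q) (𝓝 0) (𝓝 ((0:ℝ) ^ q)) :=
    (Real.continuousAt_rpow_const 0 q (Or.inr hq.le)).tendsto
  rw [Real.zero_rpow hq.ne'] at h
  exact h.mono_left nhdsWithin_le_nhds

lemma aux_tendsto_rpow_mul_logpow {q : ℝ} (hq : 0 < q) {d : ℕ} (hd : d ≤ 1) :
    Tendsto (fun t : ℝ => t ^ q * Real.log (1 / t) ^ d) (𝓝[>] 0) (𝓝 0) := by
  simp only [one_div, Real.log_inv]
  interval_cases d
  · simpa only [pow_zero, mul_one] using aux_tendsto_rpow_const hq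
  · have h := (tendsto_log_mul_rpow_nhdsGT_zero hq).neg
    rw [neg_zero] at h
    refine h.congr fun t => by ring

lemma aux_integrableOn_main {r : ℝ} (hr : -1 < r) {d : ℕ} (hd : d ≤ 1) {ε : ℝ}
    (hε0 : 0 < ε) (hε1 : ε ≤ 1) :
    IntegrableOn (fun s : ℝ => s ^ r * Real.log (1 / s) ^ d) (Set.Ioo 0 ε) := by
  interval_cases d
  · simpa only [pow_zero, mul_one] using aux_integrableOn_rpow hr hε0
  · set p : ℝ := (r + 1) / 2 with hp
    have hp0 : 0 < p := by rw [hp]; linarith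
    have hmeas : AEStronglyMeasurable (fun s : ℝ => s ^ r * Real.log (1 / s) ^ 1)
        (volume.restrict (Set.Ioo 0 ε)) := by
      apply Measurable.aestronglyMeasurable; measurability
    refine Integrable.mono ((aux_integrableOn_rpow (r := r - p) (by linarith) hε0).const_mul
      (1 / p)) hmeas ?_
    rw [ae_restrict_iff' measurableSet_Ioo]
    filter_upwards with s hs
    have hs0 : 0 < s := hs.1
    have hs1 : s ≤ 1 := hs.2.le.trans hε1
    have hlog0 : 0 ≤ Real.log (1 / s) := Real.log_nonneg (by rw [le_div_iff₀ hs0]; simpa using hs1)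
    have hb : Real.log (1 / s) ≤ (1 / p) * s ^ (-p) := by
      have h := Real.log_le_rpow_div (le_of_lt (by positivity : (0:ℝ) < 1 / s)) hp0
      calc Real.log (1 / s) ≤ (1 / s) ^ p / p := h
        _ = (1 / p) * s ^ (-p) := by
            rw [Real.rpow_neg hs0.le, one_div s, Real.inv_rpow hs0.le]; ring
    have hrpos : (0:ℝ) ≤ s ^ r := Real.rpow_nonneg hs0.le r
    have key : s ^ r * Real.log (1 / s) ^ 1 ≤ 1 / p * s ^ (r - p) := by
      have := mul_le_mul_of_nonneg_left hb hrpos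
      calc s ^ r * Real.log (1 / s) ^ 1 = s ^ r * Real.log (1 / s) := by ring
        _ ≤ s ^ r * (1 / p * s ^ (-p)) := this
        _ = 1 / p * s ^ (r - p) := by
            rw [sub_eq_add_neg, Real.rpow_add hs0]; ring
    rw [Real.norm_eq_abs, Real.norm_eq_abs, abs_of_nonneg (by positivity),
      abs_of_nonneg (by positivity)]
    exact key

lemma aux_ftc_Ioo (f f' : ℝ → ℝ) {ε : ℝ} (hε : 0 < ε)
    (hderiv : ∀ s : ℝ, 0 < s → HasDerivAt f (f' s) s)
    (hint : IntegrableOn f' (Set.Ioo 0 ε))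
    (hf0 : Tendsto f (𝓝[>] 0) (𝓝 0)) :
    ∫ s in Set.Ioo 0 ε, f' s = f ε := by
  set a : ℕ → ℝ := fun n => ε / (n + 2) with ha
  have ha_pos : ∀ n, 0 < a n := fun n => by positivity
  have ha_lt : ∀ n, a n < ε := fun n => by
    rw [ha]; apply div_lt_self hε; push_cast; linarith [Nat.cast_nonneg (α := ℝ) n]
  have hmono : Monotone fun n => Set.Ioo (a n) ε := by
    intro n m hnm
    apply Set.Ioo_subset_Ioo _ le_rfl
    apply div_le_div_of_nonneg_left hε.le (by positivity)
    push_cast; exact by linarith [(Nat.cast_le (α := ℝ)).2 hnm]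
  have hUnion : (⋃ n, Set.Ioo (a n) ε) = Set.Ioo 0 ε := by
    ext x
    simp only [Set.mem_iUnion, Set.mem_Ioo]
    constructor
    · rintro ⟨n, h1, h2⟩; exact ⟨(ha_pos n).trans h1, h2⟩
    · rintro ⟨h1, h2⟩
      obtain ⟨n, hn⟩ := exists_nat_gt (ε / x)
      refine ⟨n, ?_, h2⟩
      rw [ha, div_lt_iff₀ (by positivity)]
      rw [div_lt_iff₀ h1] at hn
      nlinarith
  have h1 := MeasureTheory.tendsto_setIntegral_of_monotone (s := fun n => Set.Ioo (a n) ε)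
    (fun n => measurableSet_Ioo) hmono (by rw [hUnion]; exact hint)
  rw [hUnion] at h1
  have h2 : ∀ n, ∫ s in Set.Ioo (a n) ε, f' s = f ε - f (a n) := by
    intro n
    have hii : IntervalIntegrable f' volume (a n) ε := by
      rw [intervalIntegrable_iff_integrableOn_Ioc_of_le (ha_lt n).le,
        integrableOn_Ioc_iff_integrableOn_Ioo]
      exact hint.mono_set (Set.Ioo_subset_Ioo (ha_pos n).le le_rfl)
    have := intervalIntegral.integral_eq_sub_of_hasDerivAt (f := f) (f' := f')
      (a := a n) (b := ε) (fun s hs => hderiv s (lt_of_lt_of_le (ha_pos n)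
        (by rw [Set.uIcc_of_le (ha_lt n).le] at hs; exact hs.1))) hii
    rw [intervalIntegral.integral_of_le (ha_lt n).le, integral_Ioc_eq_integral_Ioo] at this
    exact this
  have h3 : Tendsto (fun n => f ε - f (a n)) atTop (𝓝 (f ε - 0)) := by
    apply Tendsto.const_sub
    apply hf0.comp
    rw [tendsto_nhdsWithin_iff]
    constructor
    · rw [ha]
      have : Tendsto (fun n : ℕ => (n : ℝ) + 2) atTop atTop :=
        tendsto_atTop_add_const_right _ _ tendsto_natCast_atTop_atTop
      exact Tendsto.div_atTop tendsto_const_nhds this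
    · exact Filter.Eventually.of_forall fun n => ha_pos n
  rw [sub_zero] at h3
  exact tendsto_nhds_unique (h1.congr fun n => h2 n) h3

lemma aux_integral_rpow_Ioo {r : ℝ} (hr : -1 < r) {ε : ℝ} (hε0 : 0 < ε) :
    ∫ s in Set.Ioo 0 ε, s ^ r = ε ^ (r + 1) / (r + 1) := by
  rw [← integral_Ioc_eq_integral_Ioo, ← intervalIntegral.integral_of_le hε0.le,
    integral_rpow (Or.inl hr)]
  rw [Real.zero_rpow (by linarith : r + 1 ≠ 0)]
  ring

lemma aux_integral_main {β : ℝ} (hβ : 0 < β) {d : ℕ} (hd : d ≤ 1) {ε : ℝ}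
    (hε0 : 0 < ε) (hε1 : ε ≤ 1) :
    ∫ s in Set.Ioo 0 ε, s ^ (β - 1) * Real.log (1 / s) ^ d
      = ε ^ β * Real.log (1 / ε) ^ d / β + d * ε ^ β / β ^ 2 := by
  interval_cases d
  · simp only [pow_zero, mul_one, Nat.cast_zero, zero_mul, zero_div, add_zero]
    rw [aux_integral_rpow_Ioo (by linarith) hε0, sub_add_cancel]
  · have key := aux_ftc_Ioo
      (fun s => s ^ β * Real.log (1 / s) / β + s ^ β / β ^ 2)
      (fun s => s ^ (β - 1) * Real.log (1 / s) ^ 1) hε0 ?_ ?_ ?_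
    · rw [key]; push_cast; ring
    · intro s hs
      simp only [one_div, Real.log_inv, pow_one]
      have h1 : HasDerivAt (fun x : ℝ => x ^ β) (β * s ^ (β - 1)) s :=
        Real.hasDerivAt_rpow_const (Or.inl hs.ne')
      have h2 : HasDerivAt (fun x : ℝ => -Real.log x) (-s⁻¹) s :=
        (Real.hasDerivAt_log hs.ne').neg
      have h3 := ((h1.mul h2).div_const β).add (h1.div_const (β ^ 2))
      refine h3.congr_deriv ?_
      have hsβ : s ^ β = s ^ (β - 1) * s := by
        rw [← Real.rpow_add_one hs.ne' (β - 1), sub_add_cancel]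
      rw [hsβ]
      field_simp
      ring
    · exact aux_integrableOn_main (by linarith) le_rfl hε0 hε1
    · have h1 := (tendsto_log_mul_rpow_nhdsGT_zero hβ).neg
      rw [neg_zero] at h1
      have h2 := aux_tendsto_rpow_const hβ
      have := (h1.div_const β).add (h2.div_const (β ^ 2))
      simp only [zero_div, add_zero] at this
      refine this.congr fun t => ?_
      simp only [one_div, Real.log_inv]
      ring

lemma aux_meas_rpow (r : ℝ) : Measurable fun s : ℝ => s ^ r := by measurability

set_option maxHeartbeats 1000000 in
lemma aux_parts (ν : Measure ℝ) [IsFiniteMeasure ν] (hν0 : ν (Set.Iic 0) = 0)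
    {α γ Mc c : ℝ} (hα : α ≠ 0) (hγ : -1 < α - 1 + γ)
    (hb : ∀ s ∈ Set.Ioo (0:ℝ) c, (ν (Set.Iio s)).toReal ≤ Mc * s ^ γ)
    {ε : ℝ} (hε0 : 0 < ε) (hεc : ε < c) :
    IntegrableOn (fun s => s ^ (α - 1) * (ν (Set.Iio s)).toReal) (Set.Ioo 0 ε) ∧
    ∫ t in Set.Ioo 0 ε, t ^ α ∂ν
      = ε ^ α * (ν (Set.Iio ε)).toReal
        - α * ∫ s in Set.Ioo 0 ε, s ^ (α - 1) * (ν (Set.Iio s)).toReal := by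
  have hαabs : (0:ℝ) < |α| := abs_pos.2 hα
  -- Ioo vs Iio
  have hIoo : ∀ s : ℝ, ν (Set.Ioo 0 s) = ν (Set.Iio s) := by
    intro s
    refine le_antisymm (measure_mono Set.Ioo_subset_Iio_self) ?_
    calc ν (Set.Iio s) ≤ ν (Set.Iic 0 ∪ Set.Ioo 0 s) := by
          apply measure_mono
          intro x hx
          rcases le_or_gt x 0 with h | h
          · exact Or.inl h
          · exact Or.inr ⟨h, hx⟩
      _ ≤ ν (Set.Iic 0) + ν (Set.Ioo 0 s) := measure_union_le _ _
      _ = ν (Set.Ioo 0 s) := by rw [hν0, zero_add]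
  set F : ℝ → ℝ := fun s => (ν (Set.Iio s)).toReal with hF
  have hmeasF : Measurable F := by
    apply Monotone.measurable
    intro s t hst
    exact ENNReal.toReal_mono (measure_ne_top ν _) (measure_mono (Set.Iio_subset_Iio hst))
  have hFnn : ∀ s, 0 ≤ F s := fun s => ENNReal.toReal_nonneg
  -- the nonnegative kernel
  set h' : ℝ → ENNReal := fun s => ENNReal.ofReal (|α| * s ^ (α - 1)) with hh'
  have h'meas : Measurable h' := by
    apply ENNReal.measurable_ofReal.comp
    measurability
  -- Tonelli swap
  have swap : ∫⁻ t in Set.Ioo 0 ε, (∫⁻ s in Set.Ioo t ε, h' s) ∂ν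
      = ∫⁻ s in Set.Ioo 0 ε, h' s * ν (Set.Ioo 0 s) := by
    have hset : MeasurableSet {p : ℝ × ℝ | p.1 < p.2 ∧ p.2 < ε} :=
      (measurableSet_lt measurable_fst measurable_snd).inter
        (measurableSet_lt measurable_snd measurable_const)
    have hkmeas : Measurable fun p : ℝ × ℝ =>
        Set.indicator {p : ℝ × ℝ | p.1 < p.2 ∧ p.2 < ε} (fun p => h' p.2) p :=
      (h'meas.comp measurable_snd).indicator hset
    have key := MeasureTheory.lintegral_lintegral_swap
      (μ := ν.restrict (Set.Ioo 0 ε)) (ν := volume)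
      (f := fun t s => Set.indicator {p : ℝ × ℝ | p.1 < p.2 ∧ p.2 < ε}
        (fun p => h' p.2) (t, s)) (hkmeas.aemeasurable)
    calc ∫⁻ t in Set.Ioo 0 ε, (∫⁻ s in Set.Ioo t ε, h' s) ∂ν
        = ∫⁻ t in Set.Ioo 0 ε, ∫⁻ s, Set.indicator {p : ℝ × ℝ | p.1 < p.2 ∧ p.2 < ε}
            (fun p => h' p.2) (t, s) ∂volume ∂ν := by
          apply lintegral_congr fun t => ?_
          rw [← lintegral_indicator measurableSet_Ioo]
          apply lintegral_congr fun s => ?_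
          by_cases hs : s ∈ Set.Ioo t ε
          · rw [Set.indicator_of_mem hs, Set.indicator_of_mem (by exact ⟨hs.1, hs.2⟩)]
          · rw [Set.indicator_of_notMem hs, Set.indicator_of_notMem
              (by simpa [Set.mem_Ioo] using hs)]
      _ = ∫⁻ s, ∫⁻ t in Set.Ioo 0 ε, Set.indicator {p : ℝ × ℝ | p.1 < p.2 ∧ p.2 < ε}
            (fun p => h' p.2) (t, s) ∂ν ∂volume := key
      _ = ∫⁻ s, Set.indicator (Set.Ioo 0 ε) (fun s => h' s * ν (Set.Ioo 0 s)) s ∂volume := by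
          apply lintegral_congr fun s => ?_
          by_cases hs : s < ε
          · have : ∀ t : ℝ, Set.indicator {p : ℝ × ℝ | p.1 < p.2 ∧ p.2 < ε}
                (fun p => h' p.2) (t, s) = Set.indicator (Set.Iio s) (fun _ => h' s) t := by
              intro t
              simp only [Set.indicator, Set.mem_setOf_eq, Set.mem_Iio]
              by_cases ht : t < s
              · simp [ht, hs]
              · simp [ht]
            rw [lintegral_congr this, lintegral_indicator measurableSet_Iio,
              setLIntegral_const, Measure.restrict_apply measurableSet_Iio]
            have hinter : Set.Iio s ∩ Set.Ioo 0 ε = Set.Ioo 0 s := by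
              ext x
              simp only [Set.mem_inter_iff, Set.mem_Iio, Set.mem_Ioo]
              constructor
              · rintro ⟨h1, h2, h3⟩; exact ⟨h2, h1⟩
              · rintro ⟨h1, h2⟩; exact ⟨h2, h1, h2.trans hs⟩
            rw [hinter]
            by_cases hs0 : 0 < s
            · rw [Set.indicator_of_mem (Set.mem_Ioo.2 ⟨hs0, hs⟩)]
            · rw [Set.indicator_of_notMem (by simp [Set.mem_Ioo]; intro h; exact absurd h hs0),
                Set.Ioo_eq_empty hs0, measure_empty, mul_zero]
          · have : ∀ t : ℝ, Set.indicator {p : ℝ × ℝ | p.1 < p.2 ∧ p.2 < ε}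
                (fun p => h' p.2) (t, s) = 0 := by
              intro t
              rw [Set.indicator_of_notMem (by simp [hs])]
            rw [lintegral_congr this, lintegral_const, zero_mul,
              Set.indicator_of_notMem (by simp [hs])]
      _ = ∫⁻ s in Set.Ioo 0 ε, h' s * ν (Set.Ioo 0 s) := by
          rw [lintegral_indicator measurableSet_Ioo]
  -- pointwise bound for finiteness
  have hptfin : ∀ s ∈ Set.Ioo (0:ℝ) ε, h' s * ν (Set.Ioo 0 s)
      ≤ ENNReal.ofReal ((|α| * Mc) * s ^ (α - 1 + γ)) := by
    intro s hs
    have hs0 : 0 < s := hs.1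
    have hF_eq : ν (Set.Ioo 0 s) = ENNReal.ofReal (F s) := by
      rw [hIoo s, hF, ENNReal.ofReal_toReal (measure_ne_top ν _)]
    rw [hF_eq, hh']
    rw [← ENNReal.ofReal_mul (by positivity)]
    apply ENNReal.ofReal_le_ofReal
    have hbs := hb s ⟨hs0, hs.2.trans hεc⟩
    calc |α| * s ^ (α - 1) * F s ≤ |α| * s ^ (α - 1) * (Mc * s ^ γ) := by
          apply mul_le_mul_of_nonneg_left hbs (by positivity)
      _ = |α| * Mc * s ^ (α - 1 + γ) := by rw [Real.rpow_add hs0]; ring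
  have hP_fin : ∫⁻ s in Set.Ioo 0 ε, h' s * ν (Set.Ioo 0 s) < ⊤ := by
    calc ∫⁻ s in Set.Ioo 0 ε, h' s * ν (Set.Ioo 0 s)
        ≤ ∫⁻ s in Set.Ioo 0 ε, ENNReal.ofReal ((|α| * Mc) * s ^ (α - 1 + γ)) :=
          setLIntegral_mono (by measurability) hptfin
      _ < ⊤ := ((aux_integrableOn_rpow hγ hε0).const_mul (|α| * Mc)).lintegral_lt_top
  -- closed form for the inner integral
  have hclosed : ∀ t ∈ Set.Ioo (0:ℝ) ε, (∫⁻ s in Set.Ioo t ε, h' s)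
      = ENNReal.ofReal ((|α| / α) * (ε ^ α - t ^ α)) := by
    intro t ht
    have hnot : (0:ℝ) ∉ Set.uIcc t ε := by
      rw [Set.uIcc_of_le ht.2.le]
      intro hmem
      exact absurd hmem.1 (by push_neg; exact ht.1)
    have hint1 : IntegrableOn (fun s : ℝ => |α| * s ^ (α - 1)) (Set.Ioo t ε) := by
      apply Integrable.const_mul
      have hii : IntervalIntegrable (fun s : ℝ => s ^ (α - 1)) volume t ε :=
        intervalIntegral.intervalIntegrable_rpow (Or.inr hnot)
      rw [intervalIntegrable_iff_integrableOn_Ioc_of_le ht.2.le] at hii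
      exact hii.mono_set Set.Ioo_subset_Ioc_self
    have hnn : 0 ≤ᵐ[volume.restrict (Set.Ioo t ε)] fun s : ℝ => |α| * s ^ (α - 1) := by
      filter_upwards [ae_restrict_mem measurableSet_Ioo] with s hs
      have hs0 : (0:ℝ) < s := lt_trans ht.1 hs.1
      positivity
    have hval : ∫ s in Set.Ioo t ε, |α| * s ^ (α - 1) = (|α| / α) * (ε ^ α - t ^ α) := by
      rw [← integral_Ioc_eq_integral_Ioo, ← intervalIntegral.integral_of_le ht.2.le,
        intervalIntegral.integral_const_mul,
        integral_rpow (Or.inr ⟨by intro hc; exact hα (by linarith), hnot⟩)]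
      rw [sub_add_cancel]
      field_simp
    rw [← hval, ofReal_integral_eq_lintegral_ofReal hint1 hnn]
  -- sign of the closed form
  have hsign : ∀ t ∈ Set.Ioo (0:ℝ) ε, 0 ≤ (|α| / α) * (ε ^ α - t ^ α) := by
    intro t ht
    rcases lt_or_gt_of_ne hα with hneg | hpos
    · have h1 : ε ^ α ≤ t ^ α := Real.rpow_le_rpow_of_nonpos ht.1 ht.2.le hneg.le
      have h2 : |α| / α ≤ 0 := div_nonpos_of_nonneg_of_nonpos (abs_nonneg α) hneg.le
      nlinarith
    · have h1 : t ^ α ≤ ε ^ α := Real.rpow_le_rpow ht.1.le ht.2.le hpos.le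
      have h2 : 0 ≤ |α| / α := div_nonneg (abs_nonneg α) hpos.le
      exact mul_nonneg h2 (by linarith)
  set P : ENNReal := ∫⁻ s in Set.Ioo 0 ε, h' s * ν (Set.Ioo 0 s) with hPdef
  set g₀ : ℝ → ℝ := fun t => (|α| / α) * (ε ^ α - t ^ α) with hg₀
  have hg₀meas : Measurable g₀ :=
    measurable_const.mul (measurable_const.sub (aux_meas_rpow α))
  have hlint_g₀ : ∫⁻ t in Set.Ioo 0 ε, ENNReal.ofReal (g₀ t) ∂ν = P := by
    rw [← swap]
    apply setLIntegral_congr_fun measurableSet_Ioo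
    exact fun t ht => (hclosed t ht).symm
  have hg₀nn : 0 ≤ᵐ[ν.restrict (Set.Ioo 0 ε)] g₀ := by
    filter_upwards [ae_restrict_mem measurableSet_Ioo] with t ht using hsign t ht
  have hint_g₀ : IntegrableOn g₀ (Set.Ioo 0 ε) ν := by
    refine ⟨hg₀meas.aestronglyMeasurable, ?_⟩
    rw [hasFiniteIntegral_iff_ofReal hg₀nn, hlint_g₀]
    exact hP_fin
  have hval_g₀ : ∫ t in Set.Ioo 0 ε, g₀ t ∂ν = P.toReal := by
    rw [integral_eq_lintegral_of_nonneg_ae hg₀nn hg₀meas.aestronglyMeasurable, hlint_g₀]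
  -- the F side
  have hFside_eq : ∀ s ∈ Set.Ioo (0:ℝ) ε,
      ENNReal.ofReal (|α| * s ^ (α - 1) * F s) = h' s * ν (Set.Ioo 0 s) := by
    intro s hs
    have hs0 : (0:ℝ) < s := hs.1
    rw [ENNReal.ofReal_mul (show (0:ℝ) ≤ |α| * s ^ (α - 1) by positivity), hh', hIoo s, hF,
      ENNReal.ofReal_toReal (measure_ne_top ν _)]
  have hmeasFside : Measurable fun s : ℝ => |α| * s ^ (α - 1) * F s :=
    (measurable_const.mul (aux_meas_rpow (α - 1))).mul hmeasF
  have hFside_nn : 0 ≤ᵐ[volume.restrict (Set.Ioo 0 ε)] fun s : ℝ => |α| * s ^ (α - 1) * F s := by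
    filter_upwards [ae_restrict_mem measurableSet_Ioo] with s hs
    have hs0 : (0:ℝ) < s := hs.1
    have := hFnn s
    positivity
  have hlint_F : ∫⁻ s in Set.Ioo 0 ε, ENNReal.ofReal (|α| * s ^ (α - 1) * F s) = P := by
    rw [hPdef]
    apply setLIntegral_congr_fun measurableSet_Ioo
    exact hFside_eq
  have hint_F : IntegrableOn (fun s : ℝ => |α| * s ^ (α - 1) * F s) (Set.Ioo 0 ε) := by
    refine ⟨hmeasFside.aestronglyMeasurable, ?_⟩
    rw [hasFiniteIntegral_iff_ofReal hFside_nn, hlint_F]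
    exact hP_fin
  have hval_F : ∫ s in Set.Ioo 0 ε, |α| * s ^ (α - 1) * F s = P.toReal := by
    rw [integral_eq_lintegral_of_nonneg_ae hFside_nn hmeasFside.aestronglyMeasurable, hlint_F]
  -- first conjunct
  have hconj1 : IntegrableOn (fun s : ℝ => s ^ (α - 1) * F s) (Set.Ioo 0 ε) := by
    apply (hint_F.const_mul (|α|⁻¹)).congr
    apply ae_of_all
    intro s
    field_simp
  have hI1 : ∫ s in Set.Ioo 0 ε, s ^ (α - 1) * F s = P.toReal / |α| := by
    rw [eq_div_iff hαabs.ne', mul_comm, ← hval_F, ← integral_const_mul]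
    exact setIntegral_congr_fun measurableSet_Ioo fun s _ => by ring
  -- representation of t ^ α
  have hrepr : Set.EqOn (fun t : ℝ => t ^ α) (fun t => ε ^ α - (α / |α|) * g₀ t)
      (Set.Ioo 0 ε) := by
    intro t ht
    simp only [hg₀]
    field_simp
    ring
  have hconst : IntegrableOn (fun _ : ℝ => ε ^ α) (Set.Ioo 0 ε) ν :=
    integrableOn_const (measure_ne_top ν _)
  have hmain : ∫ t in Set.Ioo 0 ε, t ^ α ∂ν = ε ^ α * F ε - (α / |α|) * P.toReal := by
    rw [setIntegral_congr_fun measurableSet_Ioo hrepr,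
      integral_sub hconst (hint_g₀.const_mul _), integral_const_mul, hval_g₀,
      setIntegral_const, measureReal_def, hIoo ε, smul_eq_mul, mul_comm]
  refine ⟨hconj1, ?_⟩
  rw [hmain, hI1, hF]
  field_simp

set_option maxHeartbeats 1000000 in
/-- The computation (6.2) of Section 6: asymptotics `μ{|S|<t} = D t^{δ₀}(ln(1/t))^{d₀} + o(...)`
of the distribution function yield asymptotics
`∫_{|S|<ε} |S|^α dμ = (δ₀ D/(α+δ₀)) ε^{α+δ₀}(ln(1/ε))^{d₀} + o(...)`. -/
theorem stmt_13 {X : Type*} [MeasurableSpace X] (μ : Measure X) [IsFiniteMeasure μ]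
    (S : X → ℝ) (hS : Measurable S)
    (D δ₀ : ℝ) (d₀ : ℕ) (hD : 0 < D) (hδ₀ : 0 < δ₀) (hd₀ : d₀ ≤ 1)
    (hasymp : (fun t : ℝ => (μ {x | |S x| < t}).toReal -
        D * t ^ δ₀ * Real.log (1 / t) ^ d₀) =o[𝓝[>] 0]
      fun t : ℝ => t ^ δ₀ * Real.log (1 / t) ^ d₀)
    (α : ℝ) (hα : -δ₀ < α) :
    (fun ε : ℝ => (∫ x in {x | |S x| < ε}, |S x| ^ α ∂μ) -
        δ₀ * D / (α + δ₀) * ε ^ (α + δ₀) * Real.log (1 / ε) ^ d₀) =o[𝓝[>] 0]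
      fun ε : ℝ => ε ^ (α + δ₀) * Real.log (1 / ε) ^ d₀ := by
  classical
  by_cases hα0 : α = 0
  · subst hα0
    have h1 : ∀ ε : ℝ, (∫ x in {x | |S x| < ε}, |S x| ^ (0:ℝ) ∂μ)
        = (μ {x | |S x| < ε}).toReal := by
      intro ε
      simp only [Real.rpow_zero]
      rw [setIntegral_const, smul_eq_mul, mul_one, measureReal_def]
    have h2 : δ₀ * D / δ₀ = D := mul_div_cancel_left₀ D hδ₀.ne'
    simp only [h1, zero_add, h2]
    exact hasymp
  -- main case
  have hβpos : 0 < α + δ₀ := by linarith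
  have hβne : α + δ₀ ≠ 0 := hβpos.ne'
  set ν : Measure ℝ := Measure.map (fun x => |S x|) μ with hν
  have hmeasabs : Measurable fun x => |S x| := hS.abs
  have hfinν : IsFiniteMeasure ν := by rw [hν]; infer_instance
  have hFμ : ∀ t : ℝ, μ {x | |S x| < t} = ν (Set.Iio t) := by
    intro t
    rw [hν, Measure.map_apply hmeasabs measurableSet_Iio]
    rfl
  have hg0 : Tendsto (fun t : ℝ => t ^ δ₀ * Real.log (1 / t) ^ d₀) (𝓝[>] 0) (𝓝 0) :=
    aux_tendsto_rpow_mul_logpow hδ₀ hd₀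
  have hr0 : Tendsto (fun t : ℝ => (μ {x | |S x| < t}).toReal) (𝓝[>] 0) (𝓝 0) := by
    have h1 := hasymp.isBigO.trans_tendsto hg0
    have h2 := hg0.const_mul D
    rw [mul_zero] at h2
    have h3 := h1.add h2
    rw [add_zero] at h3
    refine h3.congr fun t => by ring
  have hν0 : ν (Set.Iic 0) = 0 := by
    have hle : ∀ᶠ t in 𝓝[>] (0:ℝ), (ν (Set.Iic 0)).toReal ≤ (μ {x | |S x| < t}).toReal := by
      filter_upwards [self_mem_nhdsWithin] with t ht
      rw [hFμ t]
      exact ENNReal.toReal_mono (measure_ne_top ν _)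
        (measure_mono (Set.Iic_subset_Iio.2 ht))
    have hle0 := ge_of_tendsto hr0 hle
    have h0 : (ν (Set.Iic 0)).toReal = 0 := le_antisymm hle0 ENNReal.toReal_nonneg
    rw [ENNReal.toReal_eq_zero_iff] at h0
    exact h0.resolve_right (measure_ne_top ν _)
  -- the eventual polynomial bound on the distribution function
  have hev1 : ∀ᶠ t in 𝓝[>] (0:ℝ), (ν (Set.Iio t)).toReal ≤ (D + 1) * t ^ ((δ₀ - α) / 2) := by
    have hsm := aux_tendsto_rpow_mul_logpow (q := (α + δ₀) / 2) (by linarith) hd₀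
    have hsm1 : ∀ᶠ t in 𝓝[>] (0:ℝ), t ^ ((α + δ₀) / 2) * Real.log (1 / t) ^ d₀ ≤ 1 :=
      hsm.eventually_le_const one_pos
    have hbd := hasymp.def one_pos
    filter_upwards [hsm1, hbd, self_mem_nhdsWithin,
      Ioo_mem_nhdsGT_of_mem (Set.left_mem_Ico.2 one_pos)] with t h1 h2 htm ht1
    have ht : 0 < t := htm
    have hw0 : 0 ≤ Real.log (1 / t) := by
      apply Real.log_nonneg
      rw [le_div_iff₀ ht]
      simpa using ht1.2.le
    have hgnn : 0 ≤ t ^ δ₀ * Real.log (1 / t) ^ d₀ := by positivity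
    have hFle : (μ {x | |S x| < t}).toReal ≤ (D + 1) * (t ^ δ₀ * Real.log (1 / t) ^ d₀) := by
      have h2' : |(μ {x | |S x| < t}).toReal - D * t ^ δ₀ * Real.log (1 / t) ^ d₀|
          ≤ 1 * |t ^ δ₀ * Real.log (1 / t) ^ d₀| := h2
      rw [one_mul, abs_of_nonneg hgnn] at h2'
      have := abs_le.1 h2'
      nlinarith [this.2]
    have hsplit : t ^ δ₀ * Real.log (1 / t) ^ d₀
        ≤ t ^ ((δ₀ - α) / 2) := by
      have : t ^ δ₀ = t ^ ((δ₀ - α) / 2) * t ^ ((α + δ₀) / 2) := by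
        rw [← Real.rpow_add ht]; ring_nf
      rw [this, mul_assoc]
      calc t ^ ((δ₀ - α) / 2) * (t ^ ((α + δ₀) / 2) * Real.log (1 / t) ^ d₀)
          ≤ t ^ ((δ₀ - α) / 2) * 1 := by
            apply mul_le_mul_of_nonneg_left h1 (by positivity)
        _ = t ^ ((δ₀ - α) / 2) := mul_one _
    rw [← hFμ t]
    calc (μ {x | |S x| < t}).toReal ≤ (D + 1) * (t ^ δ₀ * Real.log (1 / t) ^ d₀) := hFle
      _ ≤ (D + 1) * t ^ ((δ₀ - α) / 2) := by
          apply mul_le_mul_of_nonneg_left hsplit (by linarith)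
  obtain ⟨c, (hc0 : (0:ℝ) < c), hsubc⟩ := mem_nhdsGT_iff_exists_Ioo_subset.1 hev1
  have hγ : -1 < α - 1 + (δ₀ - α) / 2 := by linarith
  have hbnd : ∀ s ∈ Set.Ioo (0:ℝ) c, (ν (Set.Iio s)).toReal ≤ (D + 1) * s ^ ((δ₀ - α) / 2) :=
    fun s hs => hsubc hs
  have hparts := fun (ε : ℝ) (hε : ε ∈ Set.Ioo (0:ℝ) c) =>
    aux_parts ν hν0 hα0 hγ hbnd hε.1 hε.2
  -- notation
  set r : ℝ → ℝ := fun t => (μ {x | |S x| < t}).toReal -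
    D * t ^ δ₀ * Real.log (1 / t) ^ d₀ with hrdef
  set E : ℝ → ℝ := fun ε => ∫ s in Set.Ioo 0 ε, s ^ (α - 1) * r s with hEdef
  set c' : ℝ := min c 1 with hc'def
  have hc'0 : 0 < c' := lt_min hc0 one_pos
  -- integrability of the pieces
  have hint_main : ∀ ε ∈ Set.Ioo (0:ℝ) c', IntegrableOn
      (fun s : ℝ => s ^ (α - 1) * (D * s ^ δ₀ * Real.log (1 / s) ^ d₀)) (Set.Ioo 0 ε) := by
    intro ε hε
    apply ((aux_integrableOn_main (r := α + δ₀ - 1) (by linarith) hd₀ hε.1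
      (hε.2.le.trans (min_le_right c 1))).const_mul D).congr
    filter_upwards [ae_restrict_mem measurableSet_Ioo] with s hs
    rw [show α + δ₀ - 1 = (α - 1) + δ₀ by ring, Real.rpow_add hs.1]
    ring
  have hint_F : ∀ ε ∈ Set.Ioo (0:ℝ) c', IntegrableOn
      (fun s : ℝ => s ^ (α - 1) * (μ {x | |S x| < s}).toReal) (Set.Ioo 0 ε) := by
    intro ε hε
    have h := (hparts ε ⟨hε.1, hε.2.trans_le (min_le_left c 1)⟩).1
    apply h.congr
    apply ae_of_all
    intro s
    simp only [hFμ s]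
  have hint_r : ∀ ε ∈ Set.Ioo (0:ℝ) c', IntegrableOn
      (fun s : ℝ => s ^ (α - 1) * r s) (Set.Ioo 0 ε) := by
    intro ε hε
    apply ((hint_F ε hε).sub (hint_main ε hε)).congr
    apply ae_of_all
    intro s
    simp only [Pi.sub_apply, hrdef]
    ring
  -- the key identity
  have hkey : ∀ ε ∈ Set.Ioo (0:ℝ) c',
      (∫ x in {x | |S x| < ε}, |S x| ^ α ∂μ) -
        δ₀ * D / (α + δ₀) * ε ^ (α + δ₀) * Real.log (1 / ε) ^ d₀
      = ε ^ α * r ε - α * D * d₀ / (α + δ₀) ^ 2 * ε ^ (α + δ₀) - α * E ε := by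
    intro ε hε
    have hε0 : 0 < ε := hε.1
    have hε1 : ε ≤ 1 := hε.2.le.trans (min_le_right c 1)
    have hεc : ε < c := hε.2.trans_le (min_le_left c 1)
    -- pass to the pushforward measure
    have hI : (∫ x in {x | |S x| < ε}, |S x| ^ α ∂μ) = ∫ t in Set.Ioo 0 ε, t ^ α ∂ν := by
      have hpre : {x | |S x| < ε} = (fun x => |S x|) ⁻¹' Set.Iio ε := rfl
      rw [hpre, ← setIntegral_map measurableSet_Iio
        ((aux_meas_rpow α).aestronglyMeasurable) hmeasabs.aemeasurable, ← hν]
      apply setIntegral_congr_set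
      apply MeasureTheory.ae_eq_set.2
      constructor
      · apply measure_mono_null _ hν0
        intro x hx
        simp only [Set.mem_diff, Set.mem_Iio, Set.mem_Ioo, not_and] at hx
        simp only [Set.mem_Iic]
        by_contra hc2
        push_neg at hc2
        exact hx.2 hc2 hx.1
      · rw [Set.diff_eq_empty.2 Set.Ioo_subset_Iio_self, measure_empty]
    rw [hI, (hparts ε ⟨hε0, hεc⟩).2]
    -- split the integral
    have hsplit : ∫ s in Set.Ioo 0 ε, s ^ (α - 1) * (ν (Set.Iio s)).toReal
        = D * (ε ^ (α + δ₀) * Real.log (1 / ε) ^ d₀ / (α + δ₀)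
            + d₀ * ε ^ (α + δ₀) / (α + δ₀) ^ 2) + E ε := by
      have h1 : ∫ s in Set.Ioo 0 ε, s ^ (α - 1) * (ν (Set.Iio s)).toReal
          = ∫ s in Set.Ioo 0 ε, (s ^ (α - 1) * (D * s ^ δ₀ * Real.log (1 / s) ^ d₀)
              + s ^ (α - 1) * r s) := by
        apply setIntegral_congr_fun measurableSet_Ioo
        intro s hs
        dsimp only
        rw [← hFμ s]
        simp only [hrdef]
        ring
      rw [h1, integral_add (hint_main ε hε) (hint_r ε hε)]
      have h2 : ∫ s in Set.Ioo 0 ε, s ^ (α - 1) * (D * s ^ δ₀ * Real.log (1 / s) ^ d₀)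
          = D * ∫ s in Set.Ioo 0 ε, s ^ (α + δ₀ - 1) * Real.log (1 / s) ^ d₀ := by
        rw [← integral_const_mul]
        apply setIntegral_congr_fun measurableSet_Ioo
        intro s hs
        dsimp only
        rw [show α + δ₀ - 1 = (α - 1) + δ₀ by ring, Real.rpow_add hs.1]
        ring
      rw [h2, show α + δ₀ - 1 = (α + δ₀) - 1 by ring,
        aux_integral_main hβpos hd₀ hε0 hε1]
    rw [hsplit]
    have hFε : (ν (Set.Iio ε)).toReal = D * ε ^ δ₀ * Real.log (1 / ε) ^ d₀ + r ε := by
      rw [← hFμ ε]; simp only [hrdef]; ring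
    rw [hFε]
    have hpow : ε ^ (α + δ₀) = ε ^ α * ε ^ δ₀ := Real.rpow_add hε0 α δ₀
    rw [hpow]
    field_simp
    ring
  -- little-o pieces
  have ho1 : (fun ε : ℝ => ε ^ α * r ε) =o[𝓝[>] 0]
      fun ε : ℝ => ε ^ (α + δ₀) * Real.log (1 / ε) ^ d₀ := by
    have h := (isBigO_refl (fun ε : ℝ => ε ^ α) (𝓝[>] 0)).mul_isLittleO hasymp
    refine h.congr' EventuallyEq.rfl ?_
    filter_upwards [self_mem_nhdsWithin] with t (ht : 0 < t)
    rw [Real.rpow_add ht]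
    ring
  have hLtop : Tendsto (fun ε : ℝ => Real.log (1 / ε)) (𝓝[>] 0) atTop := by
    have h := Real.tendsto_log_nhdsGT_zero
    have h2 : Tendsto (fun ε : ℝ => -Real.log ε) (𝓝[>] 0) atTop :=
      tendsto_neg_atBot_atTop.comp h
    refine h2.congr fun ε => by rw [one_div, Real.log_inv]
  have ho2 : (fun ε : ℝ => α * D * d₀ / (α + δ₀) ^ 2 * ε ^ (α + δ₀)) =o[𝓝[>] 0]
      fun ε : ℝ => ε ^ (α + δ₀) * Real.log (1 / ε) ^ d₀ := by
    interval_cases d₀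
    · simp only [Nat.cast_zero, mul_zero, zero_div, zero_mul]
      exact isLittleO_zero _ _
    · rw [isLittleO_iff]
      intro η hη
      filter_upwards [hLtop.eventually_ge_atTop (|α * D * 1 / (α + δ₀) ^ 2| / η),
        self_mem_nhdsWithin] with ε h1 (hε : 0 < ε)
      have hεβ : 0 ≤ ε ^ (α + δ₀) := Real.rpow_nonneg hε.le _
      have hw0 : 0 ≤ Real.log (1 / ε) := le_trans (by positivity) h1
      rw [Real.norm_eq_abs, Real.norm_eq_abs, abs_mul, abs_of_nonneg hεβ,
        abs_of_nonneg (by positivity : (0:ℝ) ≤ ε ^ (α + δ₀) * Real.log (1 / ε) ^ 1)]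
      have h2 : |α * D * (1:ℕ) / (α + δ₀) ^ 2| ≤ η * Real.log (1 / ε) := by
        rw [div_le_iff₀ hη] at h1
        calc |α * D * (1:ℕ) / (α + δ₀) ^ 2| = |α * D * (1:ℝ) / (α + δ₀) ^ 2| := by norm_num
          _ ≤ Real.log (1 / ε) * η := h1
          _ = η * Real.log (1 / ε) := mul_comm _ _
      calc |α * D * (1:ℕ) / (α + δ₀) ^ 2| * ε ^ (α + δ₀)
          ≤ (η * Real.log (1 / ε)) * ε ^ (α + δ₀) := by
            apply mul_le_mul_of_nonneg_right h2 hεβ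
        _ = η * (ε ^ (α + δ₀) * Real.log (1 / ε) ^ 1) := by ring
  have ho3 : (fun ε : ℝ => α * E ε) =o[𝓝[>] 0]
      fun ε : ℝ => ε ^ (α + δ₀) * Real.log (1 / ε) ^ d₀ := by
    rw [isLittleO_iff]
    intro η hη
    set C₀ : ℝ := 1 / (α + δ₀) + 1 / (α + δ₀) ^ 2 with hC₀
    have hC₀pos : 0 < C₀ := by rw [hC₀]; positivity
    set η₁ : ℝ := η / (|α| * C₀ + 1) with hη₁
    have hαabs : 0 < |α| := abs_pos.2 hα0
    have hη₁pos : 0 < η₁ := by rw [hη₁]; positivity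
    have hbd := hasymp.def hη₁pos
    obtain ⟨c₂, (hc₂0 : (0:ℝ) < c₂), hsub₂⟩ :=
      mem_nhdsGT_iff_exists_Ioo_subset.1 hbd
    set c₃ : ℝ := min c' (min c₂ (Real.exp (-1))) with hc₃
    have hc₃0 : 0 < c₃ := lt_min hc'0 (lt_min hc₂0 (Real.exp_pos _))
    filter_upwards [Ioo_mem_nhdsGT_of_mem (Set.left_mem_Ico.2 hc₃0)] with ε hε
    have hε0 : 0 < ε := hε.1
    have hεc' : ε ∈ Set.Ioo (0:ℝ) c' := ⟨hε.1, hε.2.trans_le (min_le_left _ _)⟩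
    have hε1 : ε ≤ 1 := hεc'.2.le.trans (min_le_right c 1)
    have hεe : ε ≤ Real.exp (-1) :=
      (hε.2.trans_le ((min_le_right _ _).trans (min_le_right _ _))).le
    have hwε1 : 1 ≤ Real.log (1 / ε) := by
      rw [one_div, Real.log_inv, le_neg]
      calc Real.log ε ≤ Real.log (Real.exp (-1)) := Real.log_le_log hε0 hεe
        _ = -1 := Real.log_exp _
    have hwd : (1:ℝ) ≤ Real.log (1 / ε) ^ d₀ := by
      interval_cases d₀
      · simp
      · simpa using hwε1
    have hwdn : (d₀:ℝ) ≤ Real.log (1 / ε) ^ d₀ := by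
      interval_cases d₀
      · simp
      · simpa using hwε1
    have hεβ : 0 < ε ^ (α + δ₀) := Real.rpow_pos_of_pos hε0 _
    -- bound |E ε|
    have hboundpt : ∀ s ∈ Set.Ioo (0:ℝ) ε,
        |s ^ (α - 1) * r s| ≤ η₁ * (s ^ (α + δ₀ - 1) * Real.log (1 / s) ^ d₀) := by
      intro s hs
      have hs0 : 0 < s := hs.1
      have hsc₂ : s ∈ Set.Ioo (0:ℝ) c₂ := by
        refine ⟨hs.1, (hs.2.trans hε.2).trans_le ?_⟩
        exact (min_le_right c' _).trans (min_le_left c₂ _)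
      have hs1 : s ≤ 1 := (hs.2.trans hεc'.2).le.trans (min_le_right c 1)
      have hw0 : 0 ≤ Real.log (1 / s) := by
        apply Real.log_nonneg
        rw [le_div_iff₀ hs0]
        simpa using hs1
      have hrs := hsub₂ hsc₂
      have habs : |r s| ≤ η₁ * (s ^ δ₀ * Real.log (1 / s) ^ d₀) := by
        have h0 : ‖r s‖ ≤ η₁ * ‖s ^ δ₀ * Real.log (1 / s) ^ d₀‖ := hrs
        rw [Real.norm_eq_abs, Real.norm_eq_abs] at h0
        rwa [abs_of_nonneg (show (0:ℝ) ≤ s ^ δ₀ * Real.log (1 / s) ^ d₀ by positivity)] at h0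
      calc |s ^ (α - 1) * r s| = s ^ (α - 1) * |r s| := by
            rw [abs_mul, abs_of_nonneg (Real.rpow_nonneg hs0.le _)]
        _ ≤ s ^ (α - 1) * (η₁ * (s ^ δ₀ * Real.log (1 / s) ^ d₀)) :=
            mul_le_mul_of_nonneg_left habs (Real.rpow_nonneg hs0.le _)
        _ = η₁ * (s ^ (α + δ₀ - 1) * Real.log (1 / s) ^ d₀) := by
            rw [show α + δ₀ - 1 = (α - 1) + δ₀ by ring, Real.rpow_add hs0]
            ring
    have hG0 : 0 ≤ ε ^ (α + δ₀) * Real.log (1 / ε) ^ d₀ :=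
      mul_nonneg hεβ.le (le_trans zero_le_one hwd)
    have hEbound : |E ε| ≤ η₁ * (C₀ * (ε ^ (α + δ₀) * Real.log (1 / ε) ^ d₀)) := by
      have h1 : |E ε| ≤ ∫ s in Set.Ioo 0 ε, |s ^ (α - 1) * r s| := by
        simp only [hEdef]
        exact MeasureTheory.norm_integral_le_integral_norm
          (μ := volume.restrict (Set.Ioo 0 ε)) (f := fun s : ℝ => s ^ (α - 1) * r s)
      have hint2 : IntegrableOn
          (fun s : ℝ => η₁ * (s ^ (α + δ₀ - 1) * Real.log (1 / s) ^ d₀)) (Set.Ioo 0 ε) :=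
        (aux_integrableOn_main (by linarith) hd₀ hε0 hε1).const_mul η₁
      have h2 : ∫ s in Set.Ioo 0 ε, |s ^ (α - 1) * r s|
          ≤ ∫ s in Set.Ioo 0 ε, η₁ * (s ^ (α + δ₀ - 1) * Real.log (1 / s) ^ d₀) :=
        setIntegral_mono_on ((hint_r ε hεc').abs) hint2 measurableSet_Ioo hboundpt
      have h3 : ∫ s in Set.Ioo 0 ε, η₁ * (s ^ (α + δ₀ - 1) * Real.log (1 / s) ^ d₀)
          = η₁ * (ε ^ (α + δ₀) * Real.log (1 / ε) ^ d₀ / (α + δ₀)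
              + d₀ * ε ^ (α + δ₀) / (α + δ₀) ^ 2) := by
        rw [integral_const_mul, aux_integral_main hβpos hd₀ hε0 hε1]
      have e1 : (d₀:ℝ) * ε ^ (α + δ₀) ≤ ε ^ (α + δ₀) * Real.log (1 / ε) ^ d₀ :=
        (mul_le_mul_of_nonneg_right hwdn hεβ.le).trans_eq (mul_comm _ _)
      have e2 : (0:ℝ) < (α + δ₀) ^ 2 := by positivity
      have h4 : ε ^ (α + δ₀) * Real.log (1 / ε) ^ d₀ / (α + δ₀)
            + d₀ * ε ^ (α + δ₀) / (α + δ₀) ^ 2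
          ≤ C₀ * (ε ^ (α + δ₀) * Real.log (1 / ε) ^ d₀) := by
        rw [hC₀]
        have hdiff : (1 / (α + δ₀) + 1 / (α + δ₀) ^ 2) * (ε ^ (α + δ₀) * Real.log (1 / ε) ^ d₀)
            - (ε ^ (α + δ₀) * Real.log (1 / ε) ^ d₀ / (α + δ₀)
                + d₀ * ε ^ (α + δ₀) / (α + δ₀) ^ 2)
            = (ε ^ (α + δ₀) * Real.log (1 / ε) ^ d₀ - d₀ * ε ^ (α + δ₀)) / (α + δ₀) ^ 2 := by
          field_simp
          ring
        have hnn := div_nonneg (by linarith :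
          (0:ℝ) ≤ ε ^ (α + δ₀) * Real.log (1 / ε) ^ d₀ - d₀ * ε ^ (α + δ₀)) e2.le
        linarith
      calc |E ε| ≤ ∫ s in Set.Ioo 0 ε, |s ^ (α - 1) * r s| := h1
        _ ≤ ∫ s in Set.Ioo 0 ε, η₁ * (s ^ (α + δ₀ - 1) * Real.log (1 / s) ^ d₀) := h2
        _ = η₁ * (ε ^ (α + δ₀) * Real.log (1 / ε) ^ d₀ / (α + δ₀)
              + d₀ * ε ^ (α + δ₀) / (α + δ₀) ^ 2) := h3
        _ ≤ η₁ * (C₀ * (ε ^ (α + δ₀) * Real.log (1 / ε) ^ d₀)) :=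
            mul_le_mul_of_nonneg_left h4 hη₁pos.le
    -- conclude
    rw [Real.norm_eq_abs, Real.norm_eq_abs, abs_mul, abs_of_nonneg hG0]
    have hfac : |α| * η₁ * C₀ ≤ η := by
      have hK : 0 < |α| * C₀ + 1 := by positivity
      have heq : |α| * η₁ * C₀ = η * ((|α| * C₀) / (|α| * C₀ + 1)) := by
        rw [hη₁]
        field_simp
      rw [heq]
      exact mul_le_of_le_one_right hη.le ((div_le_one hK).2 (by linarith))
    calc |α| * |E ε| ≤ |α| * (η₁ * (C₀ * (ε ^ (α + δ₀) * Real.log (1 / ε) ^ d₀))) :=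
          mul_le_mul_of_nonneg_left hEbound (abs_nonneg α)
      _ = |α| * η₁ * C₀ * (ε ^ (α + δ₀) * Real.log (1 / ε) ^ d₀) := by ring
      _ ≤ η * (ε ^ (α + δ₀) * Real.log (1 / ε) ^ d₀) :=
          mul_le_mul_of_nonneg_right hfac hG0
  -- assemble
  have hsum := (ho1.sub ho2).sub ho3
  refine hsum.congr' ?_ EventuallyEq.rfl
  filter_upwards [Ioo_mem_nhdsGT_of_mem (Set.left_mem_Ico.2 hc'0)] with ε hε
  exact (hkey ε hε).symm
end
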